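/- arXiv:1702.03789 — 4 statements merged into one kernel-verified Lean document; each statement's English description precedes it below -/
import Mathlib

section
/- Let X be a δ-hyperbolic connected graph (δ ≥ 1). There exist ε > 0 and s0 = 50δ such that for each s ≥ s0 the following holds: let x, y be vertices of X, let B_1, …, B_k be pairwise disjoint balls of radius s centred at points on a geodesic [x,y], each centre at distance at least s from {x,y}, and let α be a path from x to y that avoids all the B_i. Then the length of α is at least k·(1+ε)^s. -/
open SimpleGraph

/-- A graph has uniformly bounded degree if there is a uniform finite bound on
the cardinality of all neighbour sets. -/
def BddDegree {V : Type*} (G : SimpleGraph V) : Prop :=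
  ∃ D : ℕ, ∀ v : V, (G.neighborSet v).encard ≤ D

/-- A walk is geodesic if its length realizes the graph distance between its endpoints. -/
def SimpleGraph.Walk.IsGeodesic {V : Type*} {G : SimpleGraph V} {x y : V}
    (w : G.Walk x y) : Prop :=
  w.length = G.dist x y

/-- A graph is `δ`-hyperbolic if each side of every geodesic triangle is contained in the
closed `δ`-neighbourhood of the union of the other two sides. -/
def GraphHyperbolic {V : Type*} (G : SimpleGraph V) (δ : ℝ) : Prop :=
  ∀ ⦃a b c : V⦄ (γ₁ : G.Walk a b) (γ₂ : G.Walk b c) (γ₃ : G.Walk c a),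
    γ₁.IsGeodesic → γ₂.IsGeodesic → γ₃.IsGeodesic →
      ∀ u ∈ γ₁.support, ∃ v, (v ∈ γ₂.support ∨ v ∈ γ₃.support) ∧ (G.dist u v : ℝ) ≤ δ

/-- `x` admits an `(L,s,C)`-bigon with respect to the basepoint `x₀`: two paths from `x₀`
to `x`, each of length at most `L·d(x₀,x)`, such that any vertex of the first path outside
the `C`-neighbourhood of `{x₀, x}` is at distance more than `s` from any vertex of the
second path outside that neighbourhood. -/
def IsBigonAt {V : Type*} (G : SimpleGraph V) (x₀ : V) (L s C : ℝ) (x : V) : Prop :=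
  ∃ α₁ α₂ : G.Walk x₀ x,
    ((α₁.length : ℝ) ≤ L * G.dist x₀ x) ∧ ((α₂.length : ℝ) ≤ L * G.dist x₀ x) ∧
    ∀ u ∈ α₁.support, ∀ v ∈ α₂.support,
      (C < (G.dist x₀ u : ℝ) ∧ C < (G.dist x u : ℝ)) →
      (C < (G.dist x₀ v : ℝ) ∧ C < (G.dist x v : ℝ)) →
      s < (G.dist u v : ℝ)

/-- The set `B^X(L,s,C)` of vertices admitting an `(L,s,C)`-bigon. -/
def bigonSet {V : Type*} (G : SimpleGraph V) (x₀ : V) (L s C : ℝ) : Set V :=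
  {x | IsBigonAt G x₀ L s C x}

/-- The closed ball of radius `n` about `x` in the graph metric. -/
def gBall {V : Type*} (G : SimpleGraph V) (x : V) (n : ℕ) : Set V :=
  {v | G.dist x v ≤ n}

/-- `X` has exponentially many fat bigons at `x₀`. -/
def HasExpManyFatBigons {V : Type*} (G : SimpleGraph V) (x₀ : V) : Prop :=
  ∃ s₀ c L : ℝ, 0 ≤ s₀ ∧ 1 < c ∧ 1 < L ∧
    ∀ s : ℝ, s₀ ≤ s → ∃ C : ℝ, 0 ≤ C ∧
      {n : ℕ | (c ^ n : ℝ) ≤ ((bigonSet G x₀ L s C ∩ gBall G x₀ n).ncard : ℝ)}.Infinite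

/-- `X` has no fat bigons at `x₀`. -/
def HasNoFatBigons {V : Type*} (G : SimpleGraph V) (x₀ : V) : Prop :=
  ∀ L : ℝ, 1 ≤ L → ∃ s : ℝ, 0 ≤ s ∧ ∀ C : ℝ, 0 ≤ C →
    ∃ R : ℕ, ∀ x ∈ bigonSet G x₀ L s C, G.dist x₀ x ≤ R

/-- A coarse embedding of the graph `G` into the graph `H`, with multiplicative constant `K`
and compression function `ρ`. -/
def IsCoarseEmbedding {V W : Type*} (G : SimpleGraph V) (H : SimpleGraph W)
    (f : V → W) (K : ℝ) (ρ : ℕ → ℕ) : Prop :=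
  1 ≤ K ∧ Filter.Tendsto ρ Filter.atTop Filter.atTop ∧
    ∀ x y : V, (ρ (G.dist x y) : ℝ) ≤ (H.dist (f x) (f y) : ℝ) ∧
      (H.dist (f x) (f y) : ℝ) ≤ K * (G.dist x y : ℝ)

/-- The Cayley graph of a group with respect to a (symmetric) set `S`. -/
def cayleyGraph (G : Type*) [Group G] (S : Set G) : SimpleGraph G :=
  SimpleGraph.fromRel (fun x y => x⁻¹ * y ∈ S)

/-- The Cayley graph of `G` w.r.t. the basepoint `1` has exponential growth:
`|B_n(1)|^(1/n)` converges to a limit `> 1`. -/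
def HasExpGrowth {V : Type*} (G : SimpleGraph V) (x₀ : V) : Prop :=
  ∃ a : ℝ, 1 < a ∧
    Filter.Tendsto (fun n : ℕ => ((gBall G x₀ n).ncard : ℝ) ^ ((n : ℝ)⁻¹))
      Filter.atTop (nhds a)

/-- `Div_X(n) ≤ M`: for all vertices `a b` with `d(a,b) ≤ n` and every `c ∉ {a, b}`, there is
a path from `a` to `b` of length at most `M` avoiding the ball around `c` of radius
`(1/2)·d(c,{a,b}) − 2`. -/
def DivLE {V : Type*} (G : SimpleGraph V) (n : ℕ) (M : ℝ) : Prop :=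
  ∀ a b c : V, G.dist a b ≤ n → c ≠ a → c ≠ b →
    ∃ w : G.Walk a b, (w.length : ℝ) ≤ M ∧
      ∀ u ∈ w.support, ((min (G.dist c a) (G.dist c b) : ℝ)) / 2 - 2 < (G.dist c u : ℝ)

/-- A group (given as a graph) is one-ended. -/
def OneEnded {V : Type*} (G : SimpleGraph V) : Prop :=
  ∃! e, e ∈ G.end

section AvoidHelpersSection
namespace AvoidHelpers
open SimpleGraph Walk

variable {V : Type*} {G : SimpleGraph V}

/-- First `n` edges of a walk. -/
def takeW : ∀ {x y : V} (w : G.Walk x y) (n : ℕ), G.Walk x (w.getVert n)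
  | _, _, .nil, _ => .nil
  | _, _, .cons _ _, 0 => .nil
  | _, _, .cons h p, (n+1) => .cons h (takeW p n)

/-- Walk with first `n` edges removed. -/
def dropW : ∀ {x y : V} (w : G.Walk x y) (n : ℕ), G.Walk (w.getVert n) y
  | _, _, .nil, _ => .nil
  | _, _, .cons h p, 0 => .cons h p
  | _, _, .cons _ p, (n+1) => dropW p n

lemma length_takeW : ∀ {x y : V} (w : G.Walk x y) (n : ℕ),
    (takeW w n).length = min n w.length
  | _, _, .nil, n => by simp [takeW]
  | _, _, .cons _ _, 0 => by simp [takeW]; rfl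
  | _, _, .cons h p, (n+1) => by
      simp [takeW, length_takeW p n, Nat.succ_min_succ]

lemma length_dropW : ∀ {x y : V} (w : G.Walk x y) (n : ℕ),
    (dropW w n).length = w.length - n
  | _, _, .nil, n => by simp [dropW]
  | _, _, .cons _ _, 0 => by simp [dropW]; rfl
  | _, _, .cons h p, (n+1) => by
      simp [dropW, length_dropW p n]

lemma getVert_dropW : ∀ {x y : V} (w : G.Walk x y) (n m : ℕ),
    (dropW w n).getVert m = w.getVert (n + m)
  | _, _, .nil, n, m => rfl
  | _, _, .cons _ _, 0, m => by simp [dropW]; rfl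
  | _, _, .cons h p, (n+1), m => by
      rw [show (n+1) + m = (n + m) + 1 by omega]
      simp [dropW, getVert_dropW p n m]

lemma support_takeW : ∀ {x y : V} (w : G.Walk x y) (n : ℕ),
    (takeW w n).support ⊆ w.support
  | _, _, .nil, n => by intro a ha; exact ha
  | _, _, .cons _ _, 0 => by
      simp only [takeW]; intro a ha; exact List.mem_cons.2 (Or.inl (List.mem_singleton.1 ha))
  | _, _, .cons h p, (n+1) => by
      simp only [takeW, support_cons]
      intro a ha
      rcases List.mem_cons.1 ha with h1 | h2
      · exact List.mem_cons.2 (Or.inl h1)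
      · exact List.mem_cons.2 (Or.inr (support_takeW p n h2))

lemma support_dropW : ∀ {x y : V} (w : G.Walk x y) (n : ℕ),
    (dropW w n).support ⊆ w.support
  | _, _, .nil, n => by intro a ha; exact ha
  | _, _, .cons _ _, 0 => by simp [dropW]; exact List.Subset.refl _
  | _, _, .cons h p, (n+1) => by
      simp only [dropW, support_cons]
      intro a ha
      exact List.mem_cons.2 (Or.inr (support_dropW p n ha))

lemma getVert_mem_support' {x y : V} (w : G.Walk x y) (n : ℕ) :
    w.getVert n ∈ w.support := by
  rcases le_or_gt n w.length with h | h
  · exact mem_support_iff_exists_getVert.2 ⟨n, rfl, h⟩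
  · rw [getVert_of_length_le w h.le]; exact end_mem_support w

/-- one can walk from `getVert i` to `getVert j` in `j - i` steps. -/
lemma dist_getVert_le {x y : V} (w : G.Walk x y) {i j : ℕ} (hij : i ≤ j) :
    G.dist (w.getVert i) (w.getVert j) ≤ j - i := by
  rcases le_or_gt j w.length with hj | hj
  · have h1 : (dropW w i).getVert (j - i) = w.getVert j := by
      rw [getVert_dropW, Nat.add_sub_cancel' hij]
    have key := SimpleGraph.dist_le (takeW (dropW w i) (j - i))
    rw [length_takeW] at key
    rw [h1] at key
    exact key.trans (min_le_left _ _)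
  · rcases le_or_gt i w.length with hi | hi
    · have h1 : w.getVert j = y := getVert_of_length_le w hj.le
      have := SimpleGraph.dist_le (dropW w i)
      rw [length_dropW] at this
      rw [h1]
      exact this.trans (by omega)
    · rw [getVert_of_length_le w hi.le, getVert_of_length_le w hj.le]
      simp [SimpleGraph.dist_self]

lemma IsGeodesic.reverse {x y : V} {w : G.Walk x y} (h : w.IsGeodesic) :
    w.reverse.IsGeodesic := by
  unfold SimpleGraph.Walk.IsGeodesic at *
  rw [length_reverse, dist_comm]
  exact h

lemma geodesic_getVert (hconn : G.Connected) {x y : V} {g : G.Walk x y} (hg : g.IsGeodesic)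
    {i : ℕ} (hi : i ≤ g.length) :
    G.dist x (g.getVert i) = i ∧ G.dist (g.getVert i) y = g.length - i := by
  have h1 : G.dist x (g.getVert i) ≤ i := by
    simpa using dist_getVert_le g (Nat.zero_le i)
  have h2 : G.dist (g.getVert i) y ≤ g.length - i := by
    have h := dist_getVert_le g hi
    rwa [getVert_length] at h
  have h3 : G.dist x y ≤ G.dist x (g.getVert i) + G.dist (g.getVert i) y :=
    hconn.dist_triangle
  rw [← hg] at h3
  omega

/-- The Busemann-type progress function. -/
noncomputable def Fb (G : SimpleGraph V) (x y w : V) : ℝ :=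
  ((G.dist x w : ℝ) - (G.dist y w : ℝ)) / 2

lemma abs_Fb_sub_le (hconn : G.Connected) (x y a b : V) :
    |Fb G x y a - Fb G x y b| ≤ (G.dist a b : ℝ) := by
  have t1 : G.dist x a ≤ G.dist x b + G.dist b a := hconn.dist_triangle
  have t2 : G.dist x b ≤ G.dist x a + G.dist a b := hconn.dist_triangle
  have t3 : G.dist y a ≤ G.dist y b + G.dist b a := hconn.dist_triangle
  have t4 : G.dist y b ≤ G.dist y a + G.dist a b := hconn.dist_triangle
  have hc : G.dist b a = G.dist a b := SimpleGraph.dist_comm ..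
  rw [hc] at t1 t3
  have t1' : (G.dist x a : ℝ) ≤ G.dist x b + G.dist a b := by exact_mod_cast t1
  have t2' : (G.dist x b : ℝ) ≤ G.dist x a + G.dist a b := by exact_mod_cast t2
  have t3' : (G.dist y a : ℝ) ≤ G.dist y b + G.dist a b := by exact_mod_cast t3
  have t4' : (G.dist y b : ℝ) ≤ G.dist y a + G.dist a b := by exact_mod_cast t4
  rw [abs_le]
  unfold Fb
  constructor <;> [linarith; linarith]

/-- `Fb` along a geodesic emanating from `x` is maximised at the far end. -/
lemma Fb_le_of_geodesic_from (hconn : G.Connected) {x y u : V} {γ : G.Walk x u}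
    (hγ : γ.IsGeodesic) {q : V} (hq : q ∈ γ.support) :
    Fb G x y q ≤ Fb G x y u := by
  obtain ⟨i, rfl, hi⟩ := Walk.mem_support_iff_exists_getVert.1 hq
  obtain ⟨e1, e2⟩ := geodesic_getVert hconn hγ hi
  -- d(x,q) = i, d(q,u) = len - i, len = d(x,u)
  have hq_u : G.dist (γ.getVert i) u ≤ γ.length - i := by
    have h := dist_getVert_le γ hi
    rwa [getVert_length] at h
  have hyu : G.dist y u ≤ G.dist y (γ.getVert i) + G.dist (γ.getVert i) u :=
    hconn.dist_triangle
  have hxu : G.dist x u = γ.length := by rw [hγ]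
  unfold Fb
  have h1 : (G.dist x (γ.getVert i) : ℝ) = i := by rw [e1]
  have hyu' : (G.dist y u : ℝ) ≤ (G.dist y (γ.getVert i) : ℝ) + (γ.length - i : ℝ) := by
    have : (G.dist y u : ℝ) ≤ (G.dist y (γ.getVert i) : ℝ) + (G.dist (γ.getVert i) u : ℝ) := by
      exact_mod_cast hyu
    refine this.trans ?_
    have : (G.dist (γ.getVert i) u : ℝ) ≤ ((γ.length - i : ℕ) : ℝ) := by exact_mod_cast hq_u
    have h2 : ((γ.length - i : ℕ) : ℝ) = (γ.length : ℝ) - i := by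
      rw [Nat.cast_sub hi]
    linarith
  have hxu' : (G.dist x u : ℝ) = (γ.length : ℝ) := by exact_mod_cast hxu
  rw [h1]
  linarith

/-- `Fb` along a geodesic ending at `y` is minimised at the start. -/
lemma Fb_ge_of_geodesic_to (hconn : G.Connected) {x y v : V} {γ : G.Walk v y}
    (hγ : γ.IsGeodesic) {q : V} (hq : q ∈ γ.support) :
    Fb G x y v ≤ Fb G x y q := by
  obtain ⟨i, rfl, hi⟩ := Walk.mem_support_iff_exists_getVert.1 hq
  obtain ⟨e1, e2⟩ := geodesic_getVert hconn hγ hi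
  -- d(v,q) = i, d(q,y) = len - i, len = d(v,y)
  have hxq : G.dist x v ≤ G.dist x (γ.getVert i) + G.dist (γ.getVert i) v :=
    hconn.dist_triangle
  unfold Fb
  have h2 : (G.dist (γ.getVert i) y : ℝ) = ((γ.length - i : ℕ) : ℝ) := by rw [e2]
  have h2' : ((γ.length - i : ℕ) : ℝ) = (γ.length : ℝ) - i := by rw [Nat.cast_sub hi]
  have h1 : (G.dist v (γ.getVert i) : ℝ) = i := by rw [e1]
  have hvy : (G.dist y v : ℝ) = (γ.length : ℝ) := by
    rw [SimpleGraph.dist_comm, hγ.symm]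
  have hyq : (G.dist y (γ.getVert i) : ℝ) = (G.dist (γ.getVert i) y : ℝ) := by
    rw [SimpleGraph.dist_comm]
  have hcm : G.dist (γ.getVert i) v = G.dist v (γ.getVert i) := SimpleGraph.dist_comm ..
  rw [hcm] at hxq
  have hxq' : (G.dist x v : ℝ) ≤ (G.dist x (γ.getVert i) : ℝ) + (G.dist v (γ.getVert i) : ℝ) := by
    exact_mod_cast hxq
  rw [h1] at hxq'
  rw [hyq, h2, h2', hvy]
  linarith

/-- steps of a walk change `Fb` by at most 1. -/
lemma Fb_step (hconn : G.Connected) {a b : V} (w : G.Walk a b) (x y : V) (i : ℕ) :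
    |Fb G x y (w.getVert (i+1)) - Fb G x y (w.getVert i)| ≤ 1 := by
  rcases lt_or_ge i w.length with h | h
  · have hadj := w.adj_getVert_succ h
    have hd : G.dist (w.getVert (i+1)) (w.getVert i) ≤ 1 := by
      have := SimpleGraph.dist_le (Walk.cons hadj.symm Walk.nil)
      simpa using this
    have := abs_Fb_sub_le hconn x y (w.getVert (i+1)) (w.getVert i)
    calc |Fb G x y (w.getVert (i+1)) - Fb G x y (w.getVert i)|
        ≤ (G.dist (w.getVert (i+1)) (w.getVert i) : ℝ) := this
      _ ≤ 1 := by exact_mod_cast hd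
  · rw [getVert_of_length_le w h, getVert_of_length_le w (h.trans (Nat.le_succ i))]
    simp

/-- First-hitting index of a threshold along a walk. -/
lemma exists_first_hit {a b : V} (w : G.Walk a b) (f : V → ℝ) {τ : ℝ}
    (ha : f a < τ) (hb : τ ≤ f b) :
    ∃ j, 0 < j ∧ j ≤ w.length ∧ τ ≤ f (w.getVert j) ∧ ∀ i < j, f (w.getVert i) < τ := by
  classical
  have hex : ∃ j, τ ≤ f (w.getVert j) := ⟨w.length, by rwa [getVert_length]⟩
  have h0 : Nat.find hex ≠ 0 := by
    intro h0
    have := Nat.find_spec hex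
    rw [h0, getVert_zero] at this
    linarith
  refine ⟨Nat.find hex, Nat.pos_of_ne_zero h0, Nat.find_min' hex (by rwa [getVert_length]),
    Nat.find_spec hex, fun i hi => ?_⟩
  have := Nat.find_min hex hi
  linarith [lt_of_not_ge this]


lemma exists_first_hit_Fb (hconn : G.Connected) {a b : V} (w : G.Walk a b) (x y : V) {τ : ℝ}
    (ha : Fb G x y a < τ) (hb : τ ≤ Fb G x y b) :
    ∃ j, 0 < j ∧ j ≤ w.length ∧ τ ≤ Fb G x y (w.getVert j) ∧
      Fb G x y (w.getVert j) < τ + 1 ∧ ∀ i < j, Fb G x y (w.getVert i) < τ := by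
  obtain ⟨j, h0, hle, h3, h4⟩ := exists_first_hit w (Fb G x y) ha hb
  have hstep := Fb_step hconn w x y (j-1)
  have hj : j - 1 + 1 = j := by omega
  rw [hj] at hstep
  have hprev := h4 (j-1) (by omega)
  have habs := abs_le.1 hstep
  exact ⟨j, h0, hle, h3, by linarith [habs.1, habs.2], h4⟩

/-- Bridson–Haefliger dyadic divergence: every point of a geodesic is within
`δ·n + 1` of any path with the same endpoints of length at most `2^n`. -/
lemma divergence (hconn : G.Connected) {δ : ℝ} (hδ : 0 ≤ δ)
    (hX : GraphHyperbolic G δ) :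
    ∀ n : ℕ, ∀ {a b : V} (σ : G.Walk a b) (γ : G.Walk a b), γ.IsGeodesic →
      σ.length ≤ 2 ^ n →
      ∀ w ∈ γ.support, ∃ z ∈ σ.support, (G.dist w z : ℝ) ≤ δ * n + 1 := by
  intro n
  induction n with
  | zero =>
    intro a b σ γ hγ hlen w hw
    have hd : G.dist a b ≤ 1 := by
      have := SimpleGraph.dist_le σ
      omega
    have hlg : γ.length ≤ 1 := by rw [hγ]; exact hd
    obtain ⟨i, rfl, hi⟩ := Walk.mem_support_iff_exists_getVert.1 hw
    have hab : γ.getVert i = a ∨ γ.getVert i = b := by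
      rcases Nat.eq_zero_or_pos i with h0 | h0
      · left; rw [h0]; exact γ.getVert_zero
      · right
        have h1 : γ.length ≤ i := by omega
        exact γ.getVert_of_length_le h1
    rcases hab with h | h
    · exact ⟨a, σ.start_mem_support, by simp [h, SimpleGraph.dist_self]⟩
    · exact ⟨b, σ.end_mem_support, by simp [h, SimpleGraph.dist_self]⟩
  | succ n ih =>
    intro a b σ γ hγ hlen w hw
    rcases le_or_gt σ.length (2 ^ n) with hle | hgt
    · obtain ⟨z, hz, hdz⟩ := ih σ γ hγ hle w hw
      refine ⟨z, hz, hdz.trans ?_⟩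
      have : (n : ℝ) ≤ (n : ℝ) + 1 := by linarith
      push_cast
      nlinarith
    · set c := σ.getVert (2 ^ n) with hc
      obtain ⟨γ₂, hγ₂len⟩ := hconn.exists_walk_length_eq_dist b c
      obtain ⟨γ₃, hγ₃len⟩ := hconn.exists_walk_length_eq_dist c a
      have hγ₂ : γ₂.IsGeodesic := hγ₂len
      have hγ₃ : γ₃.IsGeodesic := hγ₃len
      obtain ⟨v, hv, hdv⟩ := hX γ γ₂ γ₃ hγ hγ₂ hγ₃ w hw
      have hdv' : ∀ z, (G.dist v z : ℝ) ≤ δ * n + 1 → z ∈ σ.support →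
          ∃ z' ∈ σ.support, (G.dist w z' : ℝ) ≤ δ * ((n:ℕ)+1 : ℕ) + 1 := by
        intro z hz hzs
        refine ⟨z, hzs, ?_⟩
        have htri : G.dist w z ≤ G.dist w v + G.dist v z := hconn.dist_triangle
        have htri' : (G.dist w z : ℝ) ≤ (G.dist w v : ℝ) + (G.dist v z : ℝ) := by
          exact_mod_cast htri
        push_cast
        linarith
      rcases hv with hv2 | hv3
      · -- v on geodesic b → c ; use second half of σ, reversed : b → c
        have hlen2 : (dropW σ (2 ^ n)).reverse.length ≤ 2 ^ n := by
          rw [Walk.length_reverse, length_dropW]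
          have : σ.length ≤ 2 ^ (n+1) := hlen
          have h2 : (2:ℕ) ^ (n+1) = 2 ^ n + 2 ^ n := by ring
          omega
        obtain ⟨z, hz, hdz⟩ := ih (dropW σ (2 ^ n)).reverse γ₂ hγ₂ hlen2 v hv2
        rw [Walk.support_reverse, List.mem_reverse] at hz
        exact hdv' z hdz (support_dropW σ (2 ^ n) hz)
      · -- v on geodesic c → a ; use first half of σ, γ₃ reversed : a → c
        have hγ₃r : γ₃.reverse.IsGeodesic := IsGeodesic.reverse hγ₃
        have hlen1 : (takeW σ (2 ^ n)).length ≤ 2 ^ n := by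
          rw [length_takeW]; exact min_le_left _ _
        have hv3' : v ∈ γ₃.reverse.support := by
          rw [Walk.support_reverse, List.mem_reverse]; exact hv3
        obtain ⟨z, hz, hdz⟩ := ih (takeW σ (2 ^ n)) γ₃.reverse hγ₃r hlen1 v hv3'
        exact hdv' z hdz (support_takeW σ (2 ^ n) hz)

end AvoidHelpers

open AvoidHelpers in
open Real in
/-- (Claim 2.) In a `δ`-hyperbolic connected graph there exist `ε > 0` and
`s₀ = 50δ` such that for all `s ≥ s₀`: if `B₁, …, B_k` are disjoint balls of radius `s`
centred at vertices of a geodesic `[x,y]`, each centre at distance at least `s` from `x`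
and `y`, then any path from `x` to `y` avoiding all the `Bᵢ` has length at least
`k·(1+ε)^s`. -/
theorem path_avoiding_balls_is_long
    {V : Type*} (X : SimpleGraph V) (hXconn : X.Connected)
    (δ : ℝ) (hδ : 1 ≤ δ) (hX : GraphHyperbolic X δ) :
    ∃ ε : ℝ, 0 < ε ∧
      ∀ s : ℝ, 50 * δ ≤ s →
        ∀ (x y : V) (g : X.Walk x y), g.IsGeodesic →
          ∀ (k : ℕ) (m : Fin k → V),
            (∀ i, m i ∈ g.support) →
            (∀ i, s ≤ (X.dist x (m i) : ℝ) ∧ s ≤ (X.dist y (m i) : ℝ)) →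
            (∀ i j, i ≠ j →
              Disjoint {v : V | (X.dist (m i) v : ℝ) ≤ s} {v : V | (X.dist (m j) v : ℝ) ≤ s}) →
            ∀ α : X.Walk x y,
              (∀ i, ∀ u ∈ α.support, s < (X.dist (m i) u : ℝ)) →
              (k : ℝ) * (1 + ε) ^ s ≤ (α.length : ℝ) := by
  classical
  have hδ0 : (0:ℝ) < δ := lt_of_lt_of_le one_pos hδ
  refine ⟨(2:ℝ) ^ ((1:ℝ)/(2*δ)) - 1, ?_, ?_⟩
  · have h1 : (2:ℝ) ^ (0:ℝ) < (2:ℝ) ^ ((1:ℝ)/(2*δ)) :=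
      Real.rpow_lt_rpow_of_exponent_lt one_lt_two (by positivity)
    rw [Real.rpow_zero] at h1
    linarith
  intro s hs x y g hg k mm hmem hdist hdisj α havoid
  have hs0 : (0:ℝ) < s := by linarith
  have hbase : 1 + ((2:ℝ) ^ ((1:ℝ)/(2*δ)) - 1) = (2:ℝ) ^ ((1:ℝ)/(2*δ)) := by ring
  have hEpow : (1 + ((2:ℝ) ^ ((1:ℝ)/(2*δ)) - 1)) ^ s = (2:ℝ) ^ (s/(2*δ)) := by
    rw [hbase, ← Real.rpow_mul (by norm_num : (0:ℝ) ≤ 2)]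
    congr 1
    field_simp
  rw [hEpow]
  -- setup
  set F := Fb X x y with hF
  set L := g.length with hLdef
  have hL : X.dist x y = L := hg.symm
  have ht : ∀ i, ∃ t, g.getVert t = mm i ∧ t ≤ L := fun i =>
    Walk.mem_support_iff_exists_getVert.1 (hmem i)
  choose t htv htle using ht
  have hdx : ∀ i, X.dist x (mm i) = t i := fun i => by
    rw [← htv i]; exact (geodesic_getVert hXconn hg (htle i)).1
  have hdy : ∀ i, X.dist (mm i) y = L - t i := fun i => by
    rw [← htv i]; exact (geodesic_getVert hXconn hg (htle i)).2
  have hts : ∀ i, s ≤ (t i : ℝ) := fun i => by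
    have := (hdist i).1; rwa [hdx i] at this
  have hty : ∀ i, s ≤ (L : ℝ) - (t i : ℝ) := fun i => by
    have h := (hdist i).2
    rw [SimpleGraph.dist_comm, hdy i] at h
    have hc : ((L - t i : ℕ) : ℝ) = (L:ℝ) - t i := by
      rw [Nat.cast_sub (htle i)]
    linarith [hc ▸ h]
  have hFx : F x = -(L:ℝ)/2 := by
    simp only [hF, Fb, SimpleGraph.dist_self]
    rw [SimpleGraph.dist_comm (G := X) (u := y) (v := x), hL]
    push_cast; ring
  have hFy : F y = (L:ℝ)/2 := by
    simp only [hF, Fb, SimpleGraph.dist_self, hL]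
    push_cast; ring
  have hFm : ∀ i, F (mm i) = (t i : ℝ) - (L:ℝ)/2 := fun i => by
    simp only [hF, Fb]
    rw [SimpleGraph.dist_comm (G := X) (u := y) (v := mm i), hdx i, hdy i, Nat.cast_sub (htle i)]
    ring
  -- thresholds and first-hitting indices
  set τlo : Fin k → ℝ := fun i => (t i : ℝ) - (L:ℝ)/2 - s/2 with hτlo
  set τhi : Fin k → ℝ := fun i => (t i : ℝ) - (L:ℝ)/2 + s/2 with hτhi
  have hAex : ∀ i, ∃ j, 0 < j ∧ j ≤ α.length ∧ τlo i ≤ F (α.getVert j) ∧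
      F (α.getVert j) < τlo i + 1 ∧ ∀ i' < j, F (α.getVert i') < τlo i := by
    intro i
    apply exists_first_hit_Fb hXconn α x y
    · rw [← hF, hFx]; simp only [hτlo]; have := hts i; linarith
    · rw [← hF, hFy]; simp only [hτlo]; have := hty i; linarith
  have hBex : ∀ i, ∃ j, 0 < j ∧ j ≤ α.length ∧ τhi i ≤ F (α.getVert j) ∧
      F (α.getVert j) < τhi i + 1 ∧ ∀ i' < j, F (α.getVert i') < τhi i := by
    intro i
    apply exists_first_hit_Fb hXconn α x y
    · rw [← hF, hFx]; simp only [hτhi]; have := hts i; linarith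
    · rw [← hF, hFy]; simp only [hτhi]; have := hty i; linarith
  choose A hA0 hAle hA3 hA4 hA5 using hAex
  choose B hB0 hBle hB3 hB4 hB5 using hBex
  have hABmono : ∀ i j : Fin k, τlo i ≤ τhi j → A i ≤ B j := by
    intro i j hτ
    by_contra hc
    push_neg at hc
    have h1 := hA5 i (B j) hc
    have h2 := hB3 j
    linarith
  have hBAmono : ∀ i j : Fin k, τhi i ≤ τlo j → B i ≤ A j := by
    intro i j hτ
    by_contra hc
    push_neg at hc
    have h1 := hB5 i (A j) hc
    have h2 := hA3 j
    linarith
  have hAB : ∀ i, A i ≤ B i := fun i => hABmono i i (by simp only [hτlo, hτhi]; linarith)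
  -- separation of the centres
  have hgap : ∀ i j : Fin k, i ≠ j → s ≤ |(t i : ℝ) - (t j : ℝ)| := by
    intro i j hij
    set d := X.dist (mm i) (mm j) with hd
    have claim1 : (d:ℝ) ≤ |(t i : ℝ) - (t j : ℝ)| := by
      rcases le_total (t i) (t j) with h | h
      · have h1 := dist_getVert_le g h
        rw [htv i, htv j] at h1
        have h2 : ((t j - t i : ℕ) : ℝ) = (t j : ℝ) - t i := by rw [Nat.cast_sub h]
        have h3 : (d:ℝ) ≤ ((t j - t i : ℕ) : ℝ) := by exact_mod_cast h1
        rw [h2] at h3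
        refine h3.trans ?_
        rw [abs_sub_comm]
        exact le_abs_self _
      · have h1 := dist_getVert_le g h
        rw [htv i, htv j] at h1
        have h1' : d ≤ t i - t j := by
          rw [hd, SimpleGraph.dist_comm]; exact h1
        have h2 : ((t i - t j : ℕ) : ℝ) = (t i : ℝ) - t j := by rw [Nat.cast_sub h]
        have h3 : (d:ℝ) ≤ ((t i - t j : ℕ) : ℝ) := by exact_mod_cast h1'
        rw [h2] at h3
        exact h3.trans (le_abs_self _)
    have claim2 : 2*s - 1 < (d:ℝ) := by
      by_contra hc
      push_neg at hc
      obtain ⟨γij, hγij⟩ := hXconn.exists_walk_length_eq_dist (mm i) (mm j)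
      set p := γij.getVert ((d+1)/2) with hp
      have h1 : X.dist (mm i) p ≤ (d+1)/2 := by
        have h1' := dist_getVert_le γij (Nat.zero_le ((d+1)/2))
        simpa using h1'
      have h2 : X.dist p (mm j) ≤ d - (d+1)/2 := by
        have hle2 : (d+1)/2 ≤ γij.length := by rw [hγij, ← hd]; omega
        have h2' := dist_getVert_le γij hle2
        rw [Walk.getVert_length, hγij, ← hd] at h2'
        exact h2'
      have hdd : (((d+1)/2 : ℕ) : ℝ) * 2 ≤ (d:ℝ) + 1 := by
        exact_mod_cast Nat.div_mul_le_self (d+1) 2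
      have hcast1 : (X.dist (mm i) p : ℝ) ≤ s := by
        have hb : (X.dist (mm i) p : ℝ) ≤ (((d+1)/2 : ℕ) : ℝ) := by exact_mod_cast h1
        linarith
      have hcast2 : (X.dist (mm j) p : ℝ) ≤ s := by
        have h4 : d - (d+1)/2 ≤ d/2 := by omega
        have h6 : ((d/2 : ℕ):ℝ) * 2 ≤ (d:ℝ) := by exact_mod_cast Nat.div_mul_le_self d 2
        have h7 : ((d - (d+1)/2 : ℕ) : ℝ) ≤ ((d/2 : ℕ) : ℝ) := by exact_mod_cast h4
        have hb : (X.dist (mm j) p : ℝ) ≤ ((d - (d+1)/2 : ℕ) : ℝ) := by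
          rw [SimpleGraph.dist_comm]; exact_mod_cast h2
        linarith
      have hmem1 : p ∈ {v : V | (X.dist (mm i) v : ℝ) ≤ s} := hcast1
      have hmem2 : p ∈ {v : V | (X.dist (mm j) v : ℝ) ≤ s} := hcast2
      exact Set.disjoint_left.1 (hdisj i j hij) hmem1 hmem2
    have hfin : s ≤ 2*s - 1 := by linarith
    linarith
  -- disjointness of the index intervals
  have hdisjIoc : ∀ i j : Fin k, i ≠ j →
      Disjoint (Finset.Ioc (A i) (B i)) (Finset.Ioc (A j) (B j)) := by
    have key : ∀ i j : Fin k, (t i : ℝ) < t j →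
        Disjoint (Finset.Ioc (A i) (B i)) (Finset.Ioc (A j) (B j)) := by
      intro i j hlt
      have hij : i ≠ j := by
        intro h; rw [h] at hlt; exact lt_irrefl _ hlt
      have hsep := hgap i j hij
      rw [abs_of_nonpos (by linarith), neg_sub] at hsep
      have hτ : τhi i ≤ τlo j := by simp only [hτlo, hτhi]; linarith
      have hBA := hBAmono i j hτ
      rw [Finset.disjoint_left]
      intro a ha ha'
      rw [Finset.mem_Ioc] at ha ha'
      omega
    intro i j hij
    rcases lt_trichotomy ((t i : ℝ)) ((t j : ℝ)) with h | h | h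
    · exact key i j h
    · exfalso
      have hg2 := hgap i j hij
      rw [h] at hg2
      simp at hg2
      linarith
    · exact (key j i h).symm
  -- total length bound
  have hsum : ∑ i : Fin k, (B i - A i) ≤ α.length := by
    calc ∑ i : Fin k, (B i - A i) = ∑ i : Fin k, (Finset.Ioc (A i) (B i)).card := by
          exact Finset.sum_congr rfl fun i _ => (Nat.card_Ioc _ _).symm
      _ = (Finset.univ.biUnion fun i : Fin k => Finset.Ioc (A i) (B i)).card :=
          (Finset.card_biUnion fun i _ j _ hij => hdisjIoc i j hij).symm
      _ ≤ (Finset.Ioc 0 α.length).card := by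
          apply Finset.card_le_card
          intro a ha
          rw [Finset.mem_biUnion] at ha
          obtain ⟨i, _, hai⟩ := ha
          rw [Finset.mem_Ioc] at hai ⊢
          exact ⟨by omega, hai.2.trans (hBle i)⟩
      _ = α.length := by rw [Nat.card_Ioc]; omega
  -- per-ball exponential bound
  have hkey : ∀ i : Fin k, (2:ℝ) ^ (s/(2*δ)) ≤ ((B i - A i : ℕ) : ℝ) := by
    intro i
    by_contra hcon
    push_neg at hcon
    set n := ⌈s/(2*δ)⌉₊ with hn
    have hn1 : (B i - A i : ℕ) ≤ 2 ^ n := by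
      have h1 : (2:ℝ) ^ (s/(2*δ)) ≤ (2:ℝ) ^ (n:ℝ) :=
        Real.rpow_le_rpow_of_exponent_le one_le_two (Nat.le_ceil _)
      rw [Real.rpow_natCast] at h1
      have h2 : ((B i - A i : ℕ) : ℝ) < ((2^n : ℕ) : ℝ) := by push_cast; linarith
      exact_mod_cast h2.le
    -- the subpath of α between the hitting times
    have hvend : (dropW α (A i)).getVert (B i - A i) = α.getVert (B i) := by
      rw [getVert_dropW, Nat.add_sub_cancel' (hAB i)]
    set σ : X.Walk (α.getVert (A i)) (α.getVert (B i)) :=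
      (takeW (dropW α (A i)) (B i - A i)).copy rfl hvend with hσ
    have hσlen : σ.length = B i - A i := by
      rw [hσ, Walk.length_copy, length_takeW, length_dropW]
      have := hBle i
      omega
    have hσsupp : σ.support ⊆ α.support := by
      rw [hσ, Walk.support_copy]
      exact fun z hz => support_dropW α (A i) (support_takeW _ _ hz)
    -- a geodesic from u to v and the point w* on it at level τ* = t i - L/2
    obtain ⟨γ, hγlen⟩ := hXconn.exists_walk_length_eq_dist (α.getVert (A i)) (α.getVert (B i))
    have hγ : γ.IsGeodesic := hγlen
    have hw : ∃ jw, 0 < jw ∧ jw ≤ γ.length ∧ ((t i : ℝ) - (L:ℝ)/2) ≤ F (γ.getVert jw) ∧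
        F (γ.getVert jw) < ((t i : ℝ) - (L:ℝ)/2) + 1 ∧
        ∀ i' < jw, F (γ.getVert i') < (t i : ℝ) - (L:ℝ)/2 := by
      apply exists_first_hit_Fb hXconn γ x y
      · rw [← hF]
        have h1 := hA4 i
        simp only [hτlo] at h1
        linarith
      · rw [← hF]
        have h1 := hB3 i
        simp only [hτhi] at h1
        linarith
    obtain ⟨jw, hjw0, hjwle, hw3, hw4, hw5⟩ := hw
    set w : V := γ.getVert jw with hwdef
    have hwsup : w ∈ γ.support := getVert_mem_support' γ jw
    -- triangle 1 : (u, v, x)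
    obtain ⟨γ₂, hγ₂len⟩ := hXconn.exists_walk_length_eq_dist (α.getVert (B i)) x
    have hγ₂ : γ₂.IsGeodesic := hγ₂len
    obtain ⟨γ₃, hγ₃len⟩ := hXconn.exists_walk_length_eq_dist x (α.getVert (A i))
    have hγ₃ : γ₃.IsGeodesic := hγ₃len
    obtain ⟨q, hq, hdq⟩ := hX γ γ₂ γ₃ hγ hγ₂ hγ₃ w hwsup
    have hFwq : |F w - F q| ≤ δ := (abs_Fb_sub_le hXconn x y w q).trans hdq
    rcases hq with hq2 | hq3
    swap
    · -- q on the geodesic x → u : contradiction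
      have hqle : F q ≤ F (α.getVert (A i)) := Fb_le_of_geodesic_from hXconn hγ₃ hq3
      have hqF : (t i : ℝ) - (L:ℝ)/2 - δ ≤ F q := by
        have := abs_le.1 hFwq
        linarith [this.1, this.2]
      have hFu : F (α.getVert (A i)) < τlo i + 1 := hA4 i
      simp only [hτlo] at hFu
      linarith
    -- triangle 2 : (v, x, y)
    obtain ⟨γ₄, hγ₄len⟩ := hXconn.exists_walk_length_eq_dist y (α.getVert (B i))
    have hγ₄ : γ₄.IsGeodesic := hγ₄len
    obtain ⟨p, hp, hdp⟩ := hX γ₂ g γ₄ hγ₂ hg hγ₄ q hq2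
    have hFqp : |F q - F p| ≤ δ := (abs_Fb_sub_le hXconn x y q p).trans hdp
    rcases hp with hpg | hp4
    swap
    · -- p on the geodesic y → v : contradiction
      have hvle : F (α.getVert (B i)) ≤ F p := by
        have hrev : γ₄.reverse.IsGeodesic := IsGeodesic.reverse hγ₄
        have hp4' : p ∈ γ₄.reverse.support := by
          rw [Walk.support_reverse, List.mem_reverse]; exact hp4
        exact Fb_ge_of_geodesic_to hXconn hrev hp4'
      have hFv : τhi i ≤ F (α.getVert (B i)) := hB3 i
      simp only [hτhi] at hFv
      have h1 := abs_le.1 hFwq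
      have h2 := abs_le.1 hFqp
      linarith [h1.1, h1.2, h2.1, h2.2]
    -- p on the base geodesic g
    obtain ⟨r, hpr, hrle⟩ := Walk.mem_support_iff_exists_getVert.1 hpg
    have hFp : F p = (r : ℝ) - (L:ℝ)/2 := by
      obtain ⟨e1, e2⟩ := geodesic_getVert hXconn hg hrle
      simp only [hF, Fb, ← hpr]
      rw [e1, SimpleGraph.dist_comm (G := X) (u := y) (v := g.getVert r), e2, Nat.cast_sub hrle]
      ring
    have hrt : |(r : ℝ) - (t i : ℝ)| ≤ 2*δ + 1 := by
      have h1 := abs_le.1 hFwq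
      have h2 := abs_le.1 hFqp
      rw [hFp] at h2
      have h3 := abs_le.1 hFwq
      have h4 := abs_le.1 hFqp
      rw [hFp] at h4
      rw [abs_le]
      constructor
      · linarith [h3.1, h3.2, h4.1, h4.2]
      · linarith [h3.1, h3.2, h4.1, h4.2]
    have hmp : (X.dist (mm i) p : ℝ) ≤ 2*δ + 1 := by
      rcases le_total r (t i) with h | h
      · have h1 := dist_getVert_le g h
        rw [htv i] at h1
        have h1' : X.dist (mm i) p ≤ t i - r := by
          rw [← hpr, SimpleGraph.dist_comm]; exact h1
        have h2 : ((t i - r : ℕ) : ℝ) = (t i : ℝ) - r := by rw [Nat.cast_sub h]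
        have h3 : (X.dist (mm i) p : ℝ) ≤ (t i : ℝ) - r := by
          rw [← h2]; exact_mod_cast h1'
        have h4 : (t i : ℝ) - r ≤ 2*δ + 1 := by
          have := abs_le.1 hrt; linarith [this.1]
        linarith
      · have h1 := dist_getVert_le g h
        rw [htv i] at h1
        have h1' : X.dist (mm i) p ≤ r - t i := by rw [← hpr]; exact h1
        have h2 : ((r - t i : ℕ) : ℝ) = (r : ℝ) - t i := by rw [Nat.cast_sub h]
        have h3 : (X.dist (mm i) p : ℝ) ≤ (r : ℝ) - t i := by
          rw [← h2]; exact_mod_cast h1'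
        have h4 : (r : ℝ) - t i ≤ 2*δ + 1 := by
          have := abs_le.1 hrt; linarith [this.2]
        linarith
    -- divergence along σ
    have hσn : σ.length ≤ 2 ^ n := by rw [hσlen]; exact hn1
    obtain ⟨z, hzσ, hdz⟩ := divergence hXconn (le_of_lt hδ0) hX n σ γ hγ hσn w hwsup
    have hzα : z ∈ α.support := hσsupp hzσ
    have hzfar : s < (X.dist (mm i) z : ℝ) := havoid i z hzα
    -- assemble the contradiction
    have htri1 : X.dist (mm i) z ≤ X.dist (mm i) p + X.dist p q + X.dist q w + X.dist w z := by
      have a1 : X.dist (mm i) z ≤ X.dist (mm i) p + X.dist p z := hXconn.dist_triangle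
      have a2 : X.dist p z ≤ X.dist p q + X.dist q z := hXconn.dist_triangle
      have a3 : X.dist q z ≤ X.dist q w + X.dist w z := hXconn.dist_triangle
      omega
    have hpq : (X.dist p q : ℝ) ≤ δ := by rw [SimpleGraph.dist_comm]; exact hdp
    have hqw : (X.dist q w : ℝ) ≤ δ := by rw [SimpleGraph.dist_comm]; exact hdq
    have htri1' : (X.dist (mm i) z : ℝ) ≤ (X.dist (mm i) p : ℝ) + (X.dist p q : ℝ)
        + (X.dist q w : ℝ) + (X.dist w z : ℝ) := by exact_mod_cast htri1
    have hnceil : (n:ℝ) < s/(2*δ) + 1 := by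
      rw [hn]
      exact Nat.ceil_lt_add_one (by positivity)
    have hδn : δ * (n:ℝ) < s/2 + δ := by
      have := mul_lt_mul_of_pos_left hnceil hδ0
      calc δ * (n:ℝ) < δ * (s/(2*δ) + 1) := this
        _ = s/2 + δ := by field_simp
    linarith
  -- conclusion
  calc (k:ℝ) * (2:ℝ) ^ (s/(2*δ)) = ∑ _i : Fin k, (2:ℝ) ^ (s/(2*δ)) := by
        rw [Finset.sum_const, Finset.card_univ, Fintype.card_fin, nsmul_eq_mul]
    _ ≤ ∑ i : Fin k, ((B i - A i : ℕ) : ℝ) := Finset.sum_le_sum fun i _ => hkey i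
    _ = ((∑ i : Fin k, (B i - A i) : ℕ) : ℝ) := by rw [Nat.cast_sum]
    _ ≤ (α.length : ℝ) := Nat.cast_le.2 hsum

end AvoidHelpersSection
end

section
/- Let X be a δ-hyperbolic connected graph (δ ≥ 1). For every L ≥ 1 there exists s ≥ 0 such that for every C ≥ 0 there exists n with the following property: whenever x, y are vertices of X with d(x,y) ≥ n and α1, α2 are paths from x to y such that, with B = N_C({x,y}), every vertex of α1 outside B is at distance at least s from every vertex of α2 outside B, then either the length of α1 is at least L·d(x,y) or the length of α2 is at least L·d(x,y). -/
open SimpleGraph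

namespace FatBigonAux


variable {V : Type*} {X : SimpleGraph V}

lemma dist_getVert_succ_le (hconn : X.Connected) {a b : V} (w : X.Walk a b) (j : ℕ) :
    X.dist (w.getVert j) (w.getVert (j+1)) ≤ 1 := by
  by_cases hj : j < w.length
  · exact SimpleGraph.dist_le (SimpleGraph.Walk.cons (w.adj_getVert_succ hj) SimpleGraph.Walk.nil)
  · push_neg at hj
    rw [w.getVert_of_length_le hj, w.getVert_of_length_le (le_trans hj (Nat.le_succ j))]
    simp [SimpleGraph.dist_self]

lemma dist_getVert_le (hconn : X.Connected) {a b : V} (w : X.Walk a b) {i j : ℕ} (hij : i ≤ j) :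
    X.dist (w.getVert i) (w.getVert j) ≤ j - i := by
  induction j, hij using Nat.le_induction with
  | base => simp
  | succ j hij ih =>
      calc X.dist (w.getVert i) (w.getVert (j+1)) ≤
            X.dist (w.getVert i) (w.getVert j) + X.dist (w.getVert j) (w.getVert (j+1)) :=
              hconn.dist_triangle
        _ ≤ (j - i) + 1 := Nat.add_le_add ih (dist_getVert_succ_le hconn w j)
        _ ≤ j + 1 - i := by omega

lemma geodesic_coords (hconn : X.Connected) {a b : V} {w : X.Walk a b}
    (hw : w.length = X.dist a b) {i j : ℕ} (hij : i ≤ j) (hj : j ≤ w.length) :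
    X.dist a (w.getVert i) = i ∧ X.dist (w.getVert i) (w.getVert j) = j - i ∧
      X.dist (w.getVert j) b = w.length - j := by
  have h1 : X.dist a (w.getVert i) ≤ i := by
    have := dist_getVert_le hconn w (Nat.zero_le i)
    rwa [w.getVert_zero, Nat.sub_zero] at this
  have h2 : X.dist (w.getVert i) (w.getVert j) ≤ j - i := dist_getVert_le hconn w hij
  have h3 : X.dist (w.getVert j) b ≤ w.length - j := by
    have := dist_getVert_le hconn w hj
    rwa [w.getVert_length] at this
  have ht : X.dist a b ≤ X.dist a (w.getVert i) + X.dist (w.getVert i) (w.getVert j)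
      + X.dist (w.getVert j) b :=
    le_trans hconn.dist_triangle (Nat.add_le_add_right hconn.dist_triangle _)
  omega

lemma geodesic_dist_left (hconn : X.Connected) {a b : V} {w : X.Walk a b}
    (hw : w.length = X.dist a b) {i : ℕ} (hi : i ≤ w.length) :
    X.dist a (w.getVert i) = i :=
  (geodesic_coords hconn hw le_rfl hi).1

lemma geodesic_dist_right (hconn : X.Connected) {a b : V} {w : X.Walk a b}
    (hw : w.length = X.dist a b) {i : ℕ} (hi : i ≤ w.length) :
    X.dist (w.getVert i) b = w.length - i :=
  (geodesic_coords hconn hw le_rfl hi).2.2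

lemma geodesic_dist_mid (hconn : X.Connected) {a b : V} {w : X.Walk a b}
    (hw : w.length = X.dist a b) {i j : ℕ} (hij : i ≤ j) (hj : j ≤ w.length) :
    X.dist (w.getVert i) (w.getVert j) = j - i :=
  (geodesic_coords hconn hw hij hj).2.1

/-- take the first `n` steps of a walk -/
def wtake {u v : V} : (p : X.Walk u v) → (n : ℕ) → X.Walk u (p.getVert n)
  | p, 0 => SimpleGraph.Walk.nil.copy rfl (p.getVert_zero).symm
  | SimpleGraph.Walk.nil, _ + 1 => SimpleGraph.Walk.nil
  | SimpleGraph.Walk.cons h q, n + 1 => SimpleGraph.Walk.cons h (wtake q n)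

lemma wtake_length {u v : V} : (p : X.Walk u v) → (n : ℕ) → (wtake p n).length = min n p.length
  | p, 0 => by simp [wtake]
  | SimpleGraph.Walk.nil, n + 1 => by simp [wtake]
  | SimpleGraph.Walk.cons h q, n + 1 => by
      show (wtake q n).length + 1 = min (n + 1) (SimpleGraph.Walk.cons h q).length
      rw [wtake_length q n, SimpleGraph.Walk.length_cons]
      omega

lemma wtake_getVert {u v : V} : (p : X.Walk u v) → (n : ℕ) → (k : ℕ) → k ≤ n →
    (wtake p n).getVert k = p.getVert k
  | p, 0, k, hk => by
      simp_all [wtake, Nat.le_zero.mp hk]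
  | SimpleGraph.Walk.nil, n + 1, k, hk => by
      simp [wtake]
  | SimpleGraph.Walk.cons h q, n + 1, 0, hk => by
      simp [wtake]
  | SimpleGraph.Walk.cons h q, n + 1, k + 1, hk => by
      simpa [wtake, SimpleGraph.Walk.getVert_cons_succ] using
        wtake_getVert q n k (Nat.succ_le_succ_iff.mp hk)

/-- drop the first `n` steps of a walk -/
def wdrop {u v : V} : (p : X.Walk u v) → (n : ℕ) → X.Walk (p.getVert n) v
  | p, 0 => p.copy (p.getVert_zero).symm rfl
  | SimpleGraph.Walk.nil, _ + 1 => SimpleGraph.Walk.nil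
  | SimpleGraph.Walk.cons _ q, n + 1 => wdrop q n

lemma wdrop_length {u v : V} : (p : X.Walk u v) → (n : ℕ) → (wdrop p n).length = p.length - n
  | p, 0 => by simp [wdrop]
  | SimpleGraph.Walk.nil, n + 1 => by simp [wdrop]
  | SimpleGraph.Walk.cons h q, n + 1 => by
      show (wdrop q n).length = (SimpleGraph.Walk.cons h q).length - (n + 1)
      rw [wdrop_length q n, SimpleGraph.Walk.length_cons]
      omega

lemma wdrop_getVert {u v : V} : (p : X.Walk u v) → (n : ℕ) → (k : ℕ) →
    (wdrop p n).getVert k = p.getVert (n + k)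
  | p, 0, k => by simp [wdrop]
  | SimpleGraph.Walk.nil, n + 1, k => rfl
  | SimpleGraph.Walk.cons h q, n + 1, k => by
      show (wdrop q n).getVert k = (SimpleGraph.Walk.cons h q).getVert (n + 1 + k)
      rw [show n + 1 + k = (n + k) + 1 from by omega, SimpleGraph.Walk.getVert_cons_succ]
      exact wdrop_getVert q n k

/-- a geodesic subsegment of a walk between positions `a ≤ b` -/
lemma seg_exists {x y : V} (γ : X.Walk x y) {a b : ℕ} (hab : a ≤ b) (hb : b ≤ γ.length) :
    ∃ σ : X.Walk (γ.getVert a) (γ.getVert b), σ.length = b - a ∧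
      ∀ k, k ≤ b - a → σ.getVert k = γ.getVert (a + k) := by
  have hend : (wdrop γ a).getVert (b - a) = γ.getVert b := by
    rw [wdrop_getVert]; congr 1; omega
  refine ⟨(wtake (wdrop γ a) (b - a)).copy rfl hend, ?_, ?_⟩
  · rw [SimpleGraph.Walk.length_copy, wtake_length, wdrop_length]; omega
  · intro k hk
    rw [SimpleGraph.Walk.getVert_copy, wtake_getVert _ _ _ hk, wdrop_getVert]


lemma exists_proj {x y : V} (γ : X.Walk x y) (u : V) :
    ∃ t, t ≤ γ.length ∧ ∀ t', t' ≤ γ.length →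
      X.dist u (γ.getVert t) ≤ X.dist u (γ.getVert t') := by
  obtain ⟨t, ht, hmin⟩ := Finset.exists_min_image (Finset.range (γ.length + 1))
    (fun t => X.dist u (γ.getVert t)) ⟨0, by simp⟩
  exact ⟨t, Nat.lt_succ_iff.mp (Finset.mem_range.mp ht),
    fun t' ht' => hmin t' (Finset.mem_range.mpr (Nat.lt_succ_of_le ht'))⟩

noncomputable def proj {x y : V} (γ : X.Walk x y) (u : V) : ℕ := (exists_proj γ u).choose

lemma proj_le {x y : V} (γ : X.Walk x y) (u : V) : proj γ u ≤ γ.length :=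
  (exists_proj γ u).choose_spec.1

lemma proj_min {x y : V} (γ : X.Walk x y) (u : V) {t : ℕ} (ht : t ≤ γ.length) :
    X.dist u (γ.getVert (proj γ u)) ≤ X.dist u (γ.getVert t) :=
  (exists_proj γ u).choose_spec.2 t ht

lemma proj_jump (hconn : X.Connected) {δ : ℝ} (hδ : 1 ≤ δ) (hX : GraphHyperbolic X δ)
    {x y : V} {γ : X.Walk x y} (hγ : γ.length = X.dist x y)
    {u u' : V} (huu' : X.dist u u' ≤ 1) :
    proj γ u' ≤ proj γ u + (4 * ⌈δ⌉₊ + 5) := by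
  set D := ⌈δ⌉₊ with hD
  have hDδ : δ ≤ (D : ℝ) := Nat.le_ceil δ
  by_contra hcon
  push_neg at hcon
  set a := proj γ u with ha
  set b := proj γ u' with hb
  have hab : a < b := by omega
  have hblen : b ≤ γ.length := proj_le γ u'
  set c := a + (b - a) / 2 with hc
  have hca : a ≤ c := by omega
  have hcb : c ≤ b := by omega
  have hclen : c ≤ γ.length := le_trans hcb hblen
  obtain ⟨σ, hσlen, hσget⟩ := seg_exists γ hab.le hblen
  have hσgeo : σ.length = X.dist (γ.getVert a) (γ.getVert b) := by
    rw [hσlen, geodesic_dist_mid hconn hγ hab.le hblen]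
  have hmget : σ.getVert (c - a) = γ.getVert c := by
    rw [hσget (c - a) (by omega)]; congr 1; omega
  have hm : γ.getVert c ∈ σ.support :=
    SimpleGraph.Walk.mem_support_iff_exists_getVert.mpr ⟨c - a, hmget, by omega⟩
  obtain ⟨g₁, hg₁⟩ := hconn.exists_walk_length_eq_dist (γ.getVert b) u
  obtain ⟨g₂, hg₂⟩ := hconn.exists_walk_length_eq_dist u (γ.getVert a)
  obtain ⟨p, hp, hpδ⟩ := hX σ g₁ g₂ hσgeo hg₁ hg₂ (γ.getVert c) hm
  have hminc : X.dist u (γ.getVert a) ≤ X.dist u (γ.getVert c) := proj_min γ u hclen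
  cases hp with
  | inl hp1 =>
      obtain ⟨i, hpi, hilen⟩ := SimpleGraph.Walk.mem_support_iff_exists_getVert.mp hp1
      have h1 : X.dist (γ.getVert b) p = i := by
        rw [← hpi]; exact geodesic_dist_left hconn hg₁ hilen
      have h2 : X.dist p u = g₁.length - i := by
        rw [← hpi]; exact geodesic_dist_right hconn hg₁ hilen
      have hh2 : g₁.length ≤ X.dist u' (γ.getVert b) + 1 := by
        rw [hg₁, SimpleGraph.dist_comm]
        calc X.dist u (γ.getVert b) ≤ X.dist u u' + X.dist u' (γ.getVert b) :=
              hconn.dist_triangle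
          _ ≤ X.dist u' (γ.getVert b) + 1 := by omega
      have hh' : X.dist u' (γ.getVert b) ≤ X.dist u (γ.getVert a) + 1 := by
        calc X.dist u' (γ.getVert b) ≤ X.dist u' (γ.getVert a) := proj_min γ u' (le_trans hab.le hblen)
          _ ≤ X.dist u' u + X.dist u (γ.getVert a) := hconn.dist_triangle
          _ ≤ X.dist u (γ.getVert a) + 1 := by rw [SimpleGraph.dist_comm]; omega
      -- triangle inequalities
      have T1 : X.dist u (γ.getVert c) ≤ X.dist u p + X.dist p (γ.getVert c) :=
        hconn.dist_triangle
      have T2 : X.dist (γ.getVert c) (γ.getVert b) ≤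
          X.dist (γ.getVert c) p + X.dist p (γ.getVert b) := hconn.dist_triangle
      have hbc : X.dist (γ.getVert c) (γ.getVert b) = b - c :=
        geodesic_dist_mid hconn hγ hcb hblen
      have hbcge : 2 * D + 3 ≤ b - c := by omega
      -- pass to ℝ
      have e2 : (X.dist p u : ℝ) = (g₁.length : ℝ) - i := by
        rw [h2]; exact Nat.cast_sub hilen
      have R1 : (X.dist u (γ.getVert c) : ℝ) ≤ (X.dist u p : ℝ) + (X.dist p (γ.getVert c) : ℝ) := by
        exact_mod_cast T1
      have R2 : ((b - c : ℕ) : ℝ) ≤ (X.dist (γ.getVert c) p : ℝ) + (X.dist p (γ.getVert b) : ℝ) := by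
        rw [← hbc]; exact_mod_cast T2
      have Rpm : (X.dist p (γ.getVert c) : ℝ) ≤ δ := by
        rw [SimpleGraph.dist_comm]; exact hpδ
      have Rpm' : (X.dist (γ.getVert c) p : ℝ) ≤ δ := hpδ
      have Rup : (X.dist u p : ℝ) = (g₁.length : ℝ) - i := by
        rw [SimpleGraph.dist_comm]; exact e2
      have Rpb : (X.dist p (γ.getVert b) : ℝ) = i := by
        rw [SimpleGraph.dist_comm]; exact_mod_cast h1
      have Rmin : (X.dist u (γ.getVert a) : ℝ) ≤ (X.dist u (γ.getVert c) : ℝ) := by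
        exact_mod_cast hminc
      have Rh2 : (g₁.length : ℝ) ≤ (X.dist u' (γ.getVert b) : ℝ) + 1 := by exact_mod_cast hh2
      have Rh' : (X.dist u' (γ.getVert b) : ℝ) ≤ (X.dist u (γ.getVert a) : ℝ) + 1 := by
        exact_mod_cast hh'
      have Rbc : (2 * (D : ℝ) + 3) ≤ ((b - c : ℕ) : ℝ) := by exact_mod_cast hbcge
      linarith
  | inr hp2 =>
      obtain ⟨i, hpi, hilen⟩ := SimpleGraph.Walk.mem_support_iff_exists_getVert.mp hp2
      have h1 : X.dist u p = i := by
        rw [← hpi]; exact geodesic_dist_left hconn hg₂ hilen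
      have h2 : X.dist p (γ.getVert a) = g₂.length - i := by
        rw [← hpi]; exact geodesic_dist_right hconn hg₂ hilen
      have T1 : X.dist u (γ.getVert c) ≤ X.dist u p + X.dist p (γ.getVert c) :=
        hconn.dist_triangle
      have T2 : X.dist (γ.getVert a) (γ.getVert c) ≤
          X.dist (γ.getVert a) p + X.dist p (γ.getVert c) := hconn.dist_triangle
      have hac : X.dist (γ.getVert a) (γ.getVert c) = c - a :=
        geodesic_dist_mid hconn hγ hca hclen
      have hacge : 2 * D + 3 ≤ c - a := by omega
      have e2 : (X.dist p (γ.getVert a) : ℝ) = (g₂.length : ℝ) - i := by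
        rw [h2]; exact Nat.cast_sub hilen
      have R1 : (X.dist u (γ.getVert c) : ℝ) ≤ (i : ℝ) + (X.dist p (γ.getVert c) : ℝ) := by
        rw [← h1]; exact_mod_cast T1
      have R2 : ((c - a : ℕ) : ℝ) ≤ (X.dist (γ.getVert a) p : ℝ) + (X.dist p (γ.getVert c) : ℝ) := by
        rw [← hac]; exact_mod_cast T2
      have Rpm : (X.dist p (γ.getVert c) : ℝ) ≤ δ := by
        rw [SimpleGraph.dist_comm]; exact hpδ
      have Rap : (X.dist (γ.getVert a) p : ℝ) = (g₂.length : ℝ) - i := by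
        rw [SimpleGraph.dist_comm]; exact e2
      have Rmin : (g₂.length : ℝ) ≤ (X.dist u (γ.getVert c) : ℝ) := by
        rw [hg₂]; exact_mod_cast hminc
      have Rac : (2 * (D : ℝ) + 3) ≤ ((c - a : ℕ) : ℝ) := by exact_mod_cast hacge
      linarith


lemma proj_contract (hconn : X.Connected) {δ : ℝ} (hδ : 1 ≤ δ) (hX : GraphHyperbolic X δ)
    {x y : V} {γ : X.Walk x y} (hγ : γ.length = X.dist x y)
    {u u' : V}
    (hu : X.dist u u' + 2 * ⌈δ⌉₊ + 1 ≤ X.dist u (γ.getVert (proj γ u))) :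
    proj γ u' ≤ proj γ u + (8 * ⌈δ⌉₊ + 1) := by
  set D := ⌈δ⌉₊ with hD
  have hDδ : δ ≤ (D : ℝ) := Nat.le_ceil δ
  by_contra hcon
  push_neg at hcon
  set a := proj γ u with ha
  set b := proj γ u' with hb
  have hab : a < b := by omega
  have hblen : b ≤ γ.length := proj_le γ u'
  have halen : a ≤ γ.length := proj_le γ u
  set c := a + (b - a) / 2 with hc
  have hca : a ≤ c := by omega
  have hcb : c ≤ b := by omega
  have hclen : c ≤ γ.length := le_trans hcb hblen
  obtain ⟨σ, hσlen, hσget⟩ := seg_exists γ hab.le hblen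
  have hσgeo : σ.length = X.dist (γ.getVert a) (γ.getVert b) := by
    rw [hσlen, geodesic_dist_mid hconn hγ hab.le hblen]
  have hmget : σ.getVert (c - a) = γ.getVert c := by
    rw [hσget (c - a) (by omega)]; congr 1; omega
  have hm : γ.getVert c ∈ σ.support :=
    SimpleGraph.Walk.mem_support_iff_exists_getVert.mpr ⟨c - a, hmget, by omega⟩
  obtain ⟨g₁, hg₁⟩ := hconn.exists_walk_length_eq_dist (γ.getVert b) u'
  obtain ⟨g₂, hg₂⟩ := hconn.exists_walk_length_eq_dist u' (γ.getVert a)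
  obtain ⟨p₁, hp1, hp1δ⟩ := hX σ g₁ g₂ hσgeo hg₁ hg₂ (γ.getVert c) hm
  have hminc : X.dist u (γ.getVert a) ≤ X.dist u (γ.getVert c) := proj_min γ u hclen
  have hminc' : X.dist u' (γ.getVert b) ≤ X.dist u' (γ.getVert c) := proj_min γ u' hclen
  cases hp1 with
  | inl hmem =>
      -- p₁ on [γ(b), u']
      obtain ⟨i, hpi, hilen⟩ := SimpleGraph.Walk.mem_support_iff_exists_getVert.mp hmem
      have h1 : X.dist (γ.getVert b) p₁ = i := by
        rw [← hpi]; exact geodesic_dist_left hconn hg₁ hilen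
      have h2 : X.dist p₁ u' = g₁.length - i := by
        rw [← hpi]; exact geodesic_dist_right hconn hg₁ hilen
      have hbc : X.dist (γ.getVert c) (γ.getVert b) = b - c :=
        geodesic_dist_mid hconn hγ hcb hblen
      have hbcge : 4 * D + 1 ≤ b - c := by omega
      have T1 : X.dist u' (γ.getVert c) ≤ X.dist u' p₁ + X.dist p₁ (γ.getVert c) :=
        hconn.dist_triangle
      have T2 : X.dist (γ.getVert c) (γ.getVert b) ≤
          X.dist (γ.getVert c) p₁ + X.dist p₁ (γ.getVert b) := hconn.dist_triangle
      have e2 : (X.dist u' p₁ : ℝ) = (g₁.length : ℝ) - i := by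
        rw [SimpleGraph.dist_comm, h2]; exact Nat.cast_sub hilen
      have R1 : (X.dist u' (γ.getVert c) : ℝ) ≤ (X.dist u' p₁ : ℝ) + (X.dist p₁ (γ.getVert c) : ℝ) := by
        exact_mod_cast T1
      have R2 : ((b - c : ℕ) : ℝ) ≤ (X.dist (γ.getVert c) p₁ : ℝ) + (X.dist p₁ (γ.getVert b) : ℝ) := by
        rw [← hbc]; exact_mod_cast T2
      have Rpm : (X.dist p₁ (γ.getVert c) : ℝ) ≤ δ := by
        rw [SimpleGraph.dist_comm]; exact hp1δ
      have Rpm' : (X.dist (γ.getVert c) p₁ : ℝ) ≤ δ := hp1δ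
      have Rpb : (X.dist p₁ (γ.getVert b) : ℝ) = i := by
        rw [SimpleGraph.dist_comm]; exact_mod_cast h1
      have Rlen : (g₁.length : ℝ) = (X.dist u' (γ.getVert b) : ℝ) := by
        rw [hg₁, SimpleGraph.dist_comm]
      have Rmin : (X.dist u' (γ.getVert b) : ℝ) ≤ (X.dist u' (γ.getVert c) : ℝ) := by
        exact_mod_cast hminc'
      have Rbc : (4 * (D : ℝ) + 1) ≤ ((b - c : ℕ) : ℝ) := by exact_mod_cast hbcge
      linarith
  | inr hmem =>
      -- p₁ on [u', γ(a)] : second triangle u' γ(a) u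
      obtain ⟨g₃, hg₃⟩ := hconn.exists_walk_length_eq_dist (γ.getVert a) u
      obtain ⟨g₄, hg₄⟩ := hconn.exists_walk_length_eq_dist u u'
      obtain ⟨p₂, hp2, hp2δ⟩ := hX g₂ g₃ g₄ hg₂ hg₃ hg₄ p₁ hmem
      have hp2c : (X.dist p₂ (γ.getVert c) : ℝ) ≤ 2 * δ := by
        have T : X.dist p₂ (γ.getVert c) ≤ X.dist p₂ p₁ + X.dist p₁ (γ.getVert c) :=
          hconn.dist_triangle
        have R : (X.dist p₂ (γ.getVert c) : ℝ) ≤ (X.dist p₂ p₁ : ℝ) + (X.dist p₁ (γ.getVert c) : ℝ) := by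
          exact_mod_cast T
        have R2 : (X.dist p₂ p₁ : ℝ) ≤ δ := by rw [SimpleGraph.dist_comm]; exact hp2δ
        have R3 : (X.dist p₁ (γ.getVert c) : ℝ) ≤ δ := by
          rw [SimpleGraph.dist_comm]; exact hp1δ
        linarith
      cases hp2 with
      | inl hmem2 =>
          -- p₂ on [γ(a), u]
          obtain ⟨i, hpi, hilen⟩ := SimpleGraph.Walk.mem_support_iff_exists_getVert.mp hmem2
          have h1 : X.dist (γ.getVert a) p₂ = i := by
            rw [← hpi]; exact geodesic_dist_left hconn hg₃ hilen
          have h2 : X.dist p₂ u = g₃.length - i := by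
            rw [← hpi]; exact geodesic_dist_right hconn hg₃ hilen
          have hac : X.dist (γ.getVert a) (γ.getVert c) = c - a :=
            geodesic_dist_mid hconn hγ hca hclen
          have hacge : 4 * D + 1 ≤ c - a := by omega
          have T1 : X.dist u (γ.getVert c) ≤ X.dist u p₂ + X.dist p₂ (γ.getVert c) :=
            hconn.dist_triangle
          have T2 : X.dist (γ.getVert a) (γ.getVert c) ≤
              X.dist (γ.getVert a) p₂ + X.dist p₂ (γ.getVert c) := hconn.dist_triangle
          have e2 : (X.dist u p₂ : ℝ) = (g₃.length : ℝ) - i := by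
            rw [SimpleGraph.dist_comm, h2]; exact Nat.cast_sub hilen
          have R1 : (X.dist u (γ.getVert c) : ℝ) ≤ (X.dist u p₂ : ℝ) + (X.dist p₂ (γ.getVert c) : ℝ) := by
            exact_mod_cast T1
          have R2 : ((c - a : ℕ) : ℝ) ≤ (i : ℝ) + (X.dist p₂ (γ.getVert c) : ℝ) := by
            rw [← hac, ← h1]; exact_mod_cast T2
          have Rlen : (g₃.length : ℝ) = (X.dist u (γ.getVert a) : ℝ) := by
            rw [hg₃, SimpleGraph.dist_comm]
          have Rmin : (X.dist u (γ.getVert a) : ℝ) ≤ (X.dist u (γ.getVert c) : ℝ) := by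
            exact_mod_cast hminc
          have Rac : (4 * (D : ℝ) + 1) ≤ ((c - a : ℕ) : ℝ) := by exact_mod_cast hacge
          linarith
      | inr hmem2 =>
          -- p₂ on [u, u']
          obtain ⟨i, hpi, hilen⟩ := SimpleGraph.Walk.mem_support_iff_exists_getVert.mp hmem2
          have h1 : X.dist u p₂ = i := by
            rw [← hpi]; exact geodesic_dist_left hconn hg₄ hilen
          have hie : i ≤ X.dist u u' := by rw [← hg₄]; exact hilen
          have T1 : X.dist u (γ.getVert c) ≤ X.dist u p₂ + X.dist p₂ (γ.getVert c) :=
            hconn.dist_triangle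
          have R1 : (X.dist u (γ.getVert c) : ℝ) ≤ (X.dist u u' : ℝ) + (X.dist p₂ (γ.getVert c) : ℝ) := by
            have : (X.dist u p₂ : ℝ) ≤ (X.dist u u' : ℝ) := by
              exact_mod_cast h1 ▸ hie
            have RT : (X.dist u (γ.getVert c) : ℝ) ≤ (X.dist u p₂ : ℝ) + (X.dist p₂ (γ.getVert c) : ℝ) := by
              exact_mod_cast T1
            linarith
          have Rmin : (X.dist u (γ.getVert a) : ℝ) ≤ (X.dist u (γ.getVert c) : ℝ) := by
            exact_mod_cast hminc
          have Rhu : (X.dist u u' : ℝ) + 2 * (D : ℝ) + 1 ≤ (X.dist u (γ.getVert a) : ℝ) := by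
            exact_mod_cast hu
          linarith


end FatBigonAux

open FatBigonAux

/-- (Claim 3.) In a `δ`-hyperbolic connected graph, for every `L ≥ 1` there
is `s ≥ 0` such that for every `C ≥ 0` there is `n` with: whenever `d(x,y) ≥ n` and
`α₁, α₂` are paths from `x` to `y` whose vertices outside `B = N_C({x,y})` are pairwise at
distance at least `s`, one of the two paths has length at least `L·d(x,y)`. -/
theorem far_apart_paths_one_is_long
    {V : Type*} (X : SimpleGraph V) (hXconn : X.Connected)
    (δ : ℝ) (hδ : 1 ≤ δ) (hX : GraphHyperbolic X δ) :
    ∀ L : ℝ, 1 ≤ L → ∃ s : ℝ, 0 ≤ s ∧ ∀ C : ℝ, 0 ≤ C → ∃ n : ℕ,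
      ∀ (x y : V), (n : ℝ) ≤ (X.dist x y : ℝ) →
        ∀ (α₁ α₂ : X.Walk x y),
          (∀ u ∈ α₁.support, ∀ v ∈ α₂.support,
            (C < (X.dist x u : ℝ) ∧ C < (X.dist y u : ℝ)) →
            (C < (X.dist x v : ℝ) ∧ C < (X.dist y v : ℝ)) →
            s ≤ (X.dist u v : ℝ)) →
          (L * (X.dist x y : ℝ) ≤ (α₁.length : ℝ) ∨ L * (X.dist x y : ℝ) ≤ (α₂.length : ℝ)) := by
  
  classical
  intro L hL
  obtain ⟨D, hD⟩ : ∃ z : ℕ, z = ⌈δ⌉₊ := ⟨_, rfl⟩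
  have hδD : δ ≤ (D : ℝ) := by rw [hD]; exact Nat.le_ceil δ
  have hD1 : 1 ≤ D := by
    rw [hD]; exact Nat.one_le_ceil_iff.mpr (by linarith)
  obtain ⟨J, hJ⟩ : ∃ z : ℕ, z = 4*D+5 := ⟨_, rfl⟩
  obtain ⟨W, hW⟩ : ∃ z : ℕ, z = 8*D+1 := ⟨_, rfl⟩
  obtain ⟨g, hg⟩ : ∃ z : ℕ, z = W + 2*J + 1 := ⟨_, rfl⟩
  have hgpos : 0 < g := by omega
  obtain ⟨Ln, hLn⟩ : ∃ z : ℕ, z = ⌈L⌉₊ := ⟨_, rfl⟩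
  have hLn1 : 1 ≤ Ln := by
    rw [hLn]; exact Nat.one_le_ceil_iff.mpr (by linarith)
  have hLLn : L ≤ (Ln : ℝ) := by rw [hLn]; exact Nat.le_ceil L
  obtain ⟨ρ, hρ⟩ : ∃ z : ℕ, z = 2*Ln*g := ⟨_, rfl⟩
  have hρpos : 0 < ρ := by
    rw [hρ]; exact Nat.mul_pos (by omega) hgpos
  obtain ⟨r, hr⟩ : ∃ z : ℕ, z = J + 2*ρ + 2*D + 1 := ⟨_, rfl⟩
  refine ⟨((2*r+1 : ℕ) : ℝ), by positivity, ?_⟩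
  intro C hC
  obtain ⟨Cn, hCn⟩ : ∃ z : ℕ, z = ⌈C⌉₊ := ⟨_, rfl⟩
  have hCCn : C ≤ (Cn : ℝ) := by rw [hCn]; exact Nat.le_ceil C
  obtain ⟨a₀, ha₀⟩ : ∃ z : ℕ, z = Cn + r + 1 := ⟨_, rfl⟩
  refine ⟨4*a₀ + 2, ?_⟩
  intro x y hdxy α₁ α₂ hsep
  set d := X.dist x y with hd
  have hnd : 4*a₀ + 2 ≤ d := by exact_mod_cast hdxy
  obtain ⟨γ, hγ⟩ := hXconn.exists_walk_length_eq_dist x y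
  have hγd : γ.length = d := hγ
  -- Step 1 : for each middle position τ, one of the two paths avoids the r-ball at γ(τ)
  have step1 : ∀ τ : ℕ, a₀ ≤ τ → τ + a₀ ≤ d →
      (∀ w ∈ α₁.support, r < X.dist w (γ.getVert τ)) ∨
      (∀ w ∈ α₂.support, r < X.dist w (γ.getVert τ)) := by
    intro τ hτ1 hτ2
    by_contra hcon
    push_neg at hcon
    obtain ⟨⟨u, hu, hur⟩, ⟨v, hv, hvr⟩⟩ := hcon
    have hτlen : τ ≤ γ.length := by omega
    have hxτ : X.dist x (γ.getVert τ) = τ := geodesic_dist_left hXconn hγ hτlen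
    have hτy : X.dist (γ.getVert τ) y = d - τ := by
      rw [geodesic_dist_right hXconn hγ hτlen, hγd]
    have hxu : Cn + 1 ≤ X.dist x u := by
      have ht : X.dist x (γ.getVert τ) ≤ X.dist x u + X.dist u (γ.getVert τ) :=
        hXconn.dist_triangle
      omega
    have hyu : Cn + 1 ≤ X.dist y u := by
      have ht : X.dist (γ.getVert τ) y ≤ X.dist (γ.getVert τ) u + X.dist u y :=
        hXconn.dist_triangle
      have hc1 : X.dist (γ.getVert τ) u = X.dist u (γ.getVert τ) := SimpleGraph.dist_comm
      have hc2 : X.dist u y = X.dist y u := SimpleGraph.dist_comm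
      omega
    have hxv : Cn + 1 ≤ X.dist x v := by
      have ht : X.dist x (γ.getVert τ) ≤ X.dist x v + X.dist v (γ.getVert τ) :=
        hXconn.dist_triangle
      omega
    have hyv : Cn + 1 ≤ X.dist y v := by
      have ht : X.dist (γ.getVert τ) y ≤ X.dist (γ.getVert τ) v + X.dist v y :=
        hXconn.dist_triangle
      have hc1 : X.dist (γ.getVert τ) v = X.dist v (γ.getVert τ) := SimpleGraph.dist_comm
      have hc2 : X.dist v y = X.dist y v := SimpleGraph.dist_comm
      omega
    have hCr : ∀ m : ℕ, Cn + 1 ≤ m → C < (m : ℝ) := by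
      intro m hm
      have : ((Cn:ℕ) : ℝ) + 1 ≤ (m : ℝ) := by exact_mod_cast hm
      linarith
    have hs := hsep u hu v hv ⟨hCr _ hxu, hCr _ hyu⟩ ⟨hCr _ hxv, hCr _ hyv⟩
    have hduv : X.dist u v ≤ 2*r := by
      have ht : X.dist u v ≤ X.dist u (γ.getVert τ) + X.dist (γ.getVert τ) v :=
        hXconn.dist_triangle
      have hc : X.dist (γ.getVert τ) v = X.dist v (γ.getVert τ) := SimpleGraph.dist_comm
      omega
    have h1 : ((2*r+1 : ℕ) : ℝ) ≤ ((X.dist u v : ℕ) : ℝ) := hs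
    have h2 : ((X.dist u v : ℕ) : ℝ) ≤ ((2*r : ℕ) : ℝ) := by exact_mod_cast hduv
    have h3 : ((2*r : ℕ) : ℝ) < ((2*r+1 : ℕ) : ℝ) := by exact_mod_cast Nat.lt_succ_self _
    linarith
  -- projections of the endpoints
  have hpx : proj γ x = 0 := by
    have h1 : X.dist x (γ.getVert (proj γ x)) ≤ X.dist x (γ.getVert 0) :=
      proj_min γ x (Nat.zero_le _)
    rw [γ.getVert_zero, SimpleGraph.dist_self] at h1
    have h2 : X.dist x (γ.getVert (proj γ x)) = proj γ x :=
      geodesic_dist_left hXconn hγ (proj_le γ x)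
    omega
  have hpy : proj γ y = γ.length := by
    have h1 : X.dist y (γ.getVert (proj γ y)) ≤ X.dist y (γ.getVert γ.length) :=
      proj_min γ y le_rfl
    rw [γ.getVert_length, SimpleGraph.dist_self] at h1
    have h2 : X.dist (γ.getVert (proj γ y)) y = γ.length - proj γ y :=
      geodesic_dist_right hXconn hγ (proj_le γ y)
    have h3 : X.dist y (γ.getVert (proj γ y)) = X.dist (γ.getVert (proj γ y)) y :=
      SimpleGraph.dist_comm
    have h4 := proj_le γ y
    omega
  -- Step 2 : crossing vertices with large height and controlled projection
  have step2 : ∀ (β : X.Walk x y) (τ : ℕ), a₀ ≤ τ → τ + a₀ ≤ d →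
      (∀ w ∈ β.support, r < X.dist w (γ.getVert τ)) →
      ∃ i, ρ ≤ i ∧ i + ρ ≤ β.length ∧ τ ≤ proj γ (β.getVert i) ∧
        proj γ (β.getVert i) ≤ τ + J ∧
        2*ρ + 2*D + 2 ≤ X.dist (β.getVert i) (γ.getVert (proj γ (β.getVert i))) := by
    intro β τ hτ1 hτ2 havoid
    have hτlen : τ ≤ γ.length := by omega
    have exS : ∃ j, τ ≤ proj γ (β.getVert j) :=
      ⟨β.length, by rw [β.getVert_length, hpy]; omega⟩
    set j₀ := Nat.find exS with hj₀def
    have hfind : τ ≤ proj γ (β.getVert j₀) := Nat.find_spec exS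
    have hj₀pos : 1 ≤ j₀ := by
      rcases Nat.eq_zero_or_pos j₀ with h0 | h
      · exfalso
        have h5 := hfind
        rw [h0, β.getVert_zero, hpx] at h5
        omega
      · exact h
    have hj₀len : j₀ ≤ β.length :=
      Nat.find_min' exS (by rw [β.getVert_length, hpy]; omega)
    have hprev : proj γ (β.getVert (j₀ - 1)) < τ := by
      have h5 := Nat.find_min exS (show j₀ - 1 < j₀ by omega)
      omega
    have hjump : proj γ (β.getVert j₀) ≤ proj γ (β.getVert (j₀-1)) + J := by
      have hd1 : X.dist (β.getVert (j₀-1)) (β.getVert j₀) ≤ 1 := by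
        have h5 := dist_getVert_le hXconn β (show j₀ - 1 ≤ j₀ by omega)
        omega
      have h6 := proj_jump hXconn hδ hX hγ hd1
      omega
    have htj : proj γ (β.getVert j₀) ≤ τ + J := by omega
    have humem : β.getVert j₀ ∈ β.support :=
      SimpleGraph.Walk.mem_support_iff_exists_getVert.mpr ⟨j₀, rfl, hj₀len⟩
    have havu : r < X.dist (β.getVert j₀) (γ.getVert τ) := havoid _ humem
    have htjlen : proj γ (β.getVert j₀) ≤ γ.length := proj_le γ _
    have hmid : X.dist (γ.getVert τ) (γ.getVert (proj γ (β.getVert j₀)))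
        = proj γ (β.getVert j₀) - τ := geodesic_dist_mid hXconn hγ hfind htjlen
    have hmid' : X.dist (γ.getVert (proj γ (β.getVert j₀))) (γ.getVert τ)
        = proj γ (β.getVert j₀) - τ := by rw [X.dist_comm]; exact hmid
    have htri : X.dist (β.getVert j₀) (γ.getVert τ) ≤
        X.dist (β.getVert j₀) (γ.getVert (proj γ (β.getVert j₀))) +
        X.dist (γ.getVert (proj γ (β.getVert j₀))) (γ.getVert τ) := hXconn.dist_triangle
    have hheight : 2*ρ + 2*D + 2 ≤
        X.dist (β.getVert j₀) (γ.getVert (proj γ (β.getVert j₀))) := by omega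
    have hρj : ρ ≤ j₀ := by
      by_contra hlt
      push_neg at hlt
      have hdx : X.dist (β.getVert 0) (β.getVert j₀) ≤ j₀ := by
        have h5 := dist_getVert_le hXconn β (Nat.zero_le j₀)
        omega
      rw [β.getVert_zero] at hdx
      have h6 : X.dist (β.getVert j₀) (γ.getVert (proj γ (β.getVert j₀))) ≤
          X.dist (β.getVert j₀) (γ.getVert 0) := proj_min γ _ (Nat.zero_le _)
      rw [γ.getVert_zero] at h6
      have h7 : X.dist (β.getVert j₀) x = X.dist x (β.getVert j₀) := SimpleGraph.dist_comm
      omega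
    have hjρ : j₀ + ρ ≤ β.length := by
      by_contra hlt
      push_neg at hlt
      have hdy : X.dist (β.getVert j₀) (β.getVert β.length) ≤ β.length - j₀ := by
        have h5 := dist_getVert_le hXconn β hj₀len
        omega
      rw [β.getVert_length] at hdy
      have h6 : X.dist (β.getVert j₀) (γ.getVert (proj γ (β.getVert j₀))) ≤
          X.dist (β.getVert j₀) (γ.getVert γ.length) := proj_min γ _ le_rfl
      rw [γ.getVert_length] at h6
      omega
    exact ⟨j₀, hρj, hjρ, hfind, htj, hheight⟩
  -- the arithmetic progression of middle positions
  obtain ⟨k, hk⟩ : ∃ z : ℕ, z = (d - 2*a₀)/g + 1 := ⟨_, rfl⟩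
  have hkg : d - 2*a₀ + 1 ≤ k * g := by
    have h1 := Nat.div_add_mod (d - 2*a₀) g
    have h2 := Nat.mod_lt (d - 2*a₀) hgpos
    have h3 : k * g = g * ((d - 2*a₀)/g) + g := by rw [hk]; ring
    omega
  have hτmem : ∀ jj, jj < k → a₀ ≤ a₀ + jj*g ∧ (a₀ + jj*g) + a₀ ≤ d := by
    intro jj hjj
    refine ⟨Nat.le_add_right _ _, ?_⟩
    have h1 : jj ≤ (d - 2*a₀)/g := by omega
    have h2 : jj * g ≤ ((d - 2*a₀)/g) * g := Nat.mul_le_mul_right g h1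
    have h3 : ((d - 2*a₀)/g) * g ≤ d - 2*a₀ := Nat.div_mul_le_self _ _
    omega
  set P : Finset ℕ := (Finset.range k).image (fun jj => a₀ + jj*g) with hP
  have hPcard : P.card = k := by
    rw [hP, Finset.card_image_of_injective _ ?_, Finset.card_range]
    intro jj jj' hjj
    exact Nat.eq_of_mul_eq_mul_right hgpos (Nat.add_left_cancel hjj)
  have hPmem : ∀ τ ∈ P, a₀ ≤ τ ∧ τ + a₀ ≤ d := by
    intro τ hτ
    rw [hP, Finset.mem_image] at hτ
    obtain ⟨jj, hjj, rfl⟩ := hτ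
    exact hτmem jj (Finset.mem_range.mp hjj)
  have hPsep : ∀ τ ∈ P, ∀ τ' ∈ P, τ ≠ τ' → τ + g ≤ τ' ∨ τ' + g ≤ τ := by
    intro τ hτ τ' hτ' hne
    rw [hP, Finset.mem_image] at hτ hτ'
    obtain ⟨jj, _, rfl⟩ := hτ
    obtain ⟨jj', _, rfl⟩ := hτ'
    have hjne : jj ≠ jj' := by rintro rfl; exact hne rfl
    rcases Nat.lt_or_ge jj jj' with h | h
    · left
      have : (jj+1) * g ≤ jj' * g := Nat.mul_le_mul_right g h
      have h5 : (jj+1)*g = jj*g + g := by ring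
      omega
    · right
      have hlt : jj' < jj := by omega
      have : (jj'+1) * g ≤ jj * g := Nat.mul_le_mul_right g hlt
      have h5 : (jj'+1)*g = jj'*g + g := by ring
      omega
  -- Step 3+4 : the counting argument
  have count : ∀ (β : X.Walk x y) (S : Finset ℕ), S ⊆ P →
      (∀ τ ∈ S, ∀ w ∈ β.support, r < X.dist w (γ.getVert τ)) →
      S.card * (2*ρ+1) ≤ β.length + 1 := by
    intro β S hSP havoid
    have hex : ∀ τ : ℕ, ∃ i, τ ∈ S →
        ρ ≤ i ∧ i + ρ ≤ β.length ∧ τ ≤ proj γ (β.getVert i) ∧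
        proj γ (β.getVert i) ≤ τ + J ∧
        2*ρ + 2*D + 2 ≤ X.dist (β.getVert i) (γ.getVert (proj γ (β.getVert i))) := by
      intro τ
      by_cases hτ : τ ∈ S
      · obtain ⟨h1, h2⟩ := hPmem τ (hSP hτ)
        obtain ⟨i, hi⟩ := step2 β τ h1 h2 (havoid τ hτ)
        exact ⟨i, fun _ => hi⟩
      · exact ⟨0, fun h => absurd h hτ⟩
    choose f hf using hex
    have hmaps : ∀ q ∈ S ×ˢ Finset.range (2*ρ+1),
        (f q.1 - ρ + q.2) ∈ Finset.range (β.length + 1) := by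
      rintro ⟨τ, m⟩ hq
      dsimp only
      rw [Finset.mem_product] at hq
      obtain ⟨hτS, hm⟩ := hq
      rw [Finset.mem_range] at hm ⊢
      obtain ⟨h1, h2, _, _, _⟩ := hf τ hτS
      omega
    have hinj : Set.InjOn (fun q : ℕ × ℕ => f q.1 - ρ + q.2)
        ↑(S ×ˢ Finset.range (2*ρ+1)) := by
      rintro ⟨τ, m⟩ hq ⟨τ', m'⟩ hq' heq
      dsimp only at heq
      simp only [Finset.coe_product, Set.mem_prod, Finset.mem_coe, Finset.mem_product,
        Finset.mem_range] at hq hq'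
      obtain ⟨hτS, hm⟩ := hq
      obtain ⟨hτS', hm'⟩ := hq'
      obtain ⟨hA1, hA2, hA3, hA4, hA5⟩ := hf τ hτS
      obtain ⟨hB1, hB2, hB3, hB4, hB5⟩ := hf τ' hτS'
      by_cases hττ' : τ = τ'
      · subst hττ'
        have : m = m' := by omega
        simp [this]
      · exfalso
        have hdist : X.dist (β.getVert (f τ)) (β.getVert (f τ')) ≤ 2*ρ := by
          rcases le_total (f τ) (f τ') with h | h
          · have h5 := dist_getVert_le hXconn β h
            omega
          · have h5 := dist_getVert_le hXconn β h
            have h6 : X.dist (β.getVert (f τ)) (β.getVert (f τ')) =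
                X.dist (β.getVert (f τ')) (β.getVert (f τ)) := SimpleGraph.dist_comm
            omega
        have hyp1 : X.dist (β.getVert (f τ)) (β.getVert (f τ')) + 2*⌈δ⌉₊ + 1 ≤
            X.dist (β.getVert (f τ)) (γ.getVert (proj γ (β.getVert (f τ)))) := by omega
        have hyp2 : X.dist (β.getVert (f τ')) (β.getVert (f τ)) + 2*⌈δ⌉₊ + 1 ≤
            X.dist (β.getVert (f τ')) (γ.getVert (proj γ (β.getVert (f τ')))) := by
          have h6 : X.dist (β.getVert (f τ')) (β.getVert (f τ)) =
              X.dist (β.getVert (f τ)) (β.getVert (f τ')) := SimpleGraph.dist_comm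
          omega
        have hc1 := proj_contract hXconn hδ hX hγ hyp1
        have hc2 := proj_contract hXconn hδ hX hγ hyp2
        have hPs := hPsep τ (hSP hτS) τ' (hSP hτS') hττ'
        omega
    have hcards := Finset.card_le_card_of_injOn _ hmaps hinj
    rw [Finset.card_product, Finset.card_range, Finset.card_range] at hcards
    exact hcards
  -- majority vote
  set S₁ : Finset ℕ := P.filter
    (fun τ => ∀ w ∈ α₁.support, r < X.dist w (γ.getVert τ)) with hS₁
  set S₂ : Finset ℕ := P.filter
    (fun τ => ∀ w ∈ α₂.support, r < X.dist w (γ.getVert τ)) with hS₂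
  have hPsub : P ⊆ S₁ ∪ S₂ := by
    intro τ hτ
    obtain ⟨h1, h2⟩ := hPmem τ hτ
    rcases step1 τ h1 h2 with h | h
    · exact Finset.mem_union_left _ (Finset.mem_filter.mpr ⟨hτ, h⟩)
    · exact Finset.mem_union_right _ (Finset.mem_filter.mpr ⟨hτ, h⟩)
  have hkcard : k ≤ S₁.card + S₂.card := by
    calc k = P.card := hPcard.symm
      _ ≤ (S₁ ∪ S₂).card := Finset.card_le_card hPsub
      _ ≤ S₁.card + S₂.card := Finset.card_union_le _ _
  have hc1 := count α₁ S₁ (Finset.filter_subset _ _)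
    (fun τ hτ => (Finset.mem_filter.mp hτ).2)
  have hc2 := count α₂ S₂ (Finset.filter_subset _ _)
    (fun τ hτ => (Finset.mem_filter.mp hτ).2)
  -- final arithmetic
  have hfinal : ∀ (β : X.Walk x y) (S : Finset ℕ), k ≤ 2 * S.card →
      S.card * (2*ρ+1) ≤ β.length + 1 → L * (d:ℝ) ≤ (β.length : ℝ) := by
    intro β S hhalf hcount
    have e1 : k * (2*ρ+1) ≤ (2*S.card) * (2*ρ+1) := Nat.mul_le_mul_right _ hhalf
    have e2 : (2*S.card) * (2*ρ+1) = 2*(S.card * (2*ρ+1)) := by ring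
    have e3 : k * (2*ρ+1) ≤ 2*(β.length + 1) := by
      calc k * (2*ρ+1) ≤ (2*S.card) * (2*ρ+1) := e1
        _ = 2*(S.card * (2*ρ+1)) := e2
        _ ≤ 2*(β.length + 1) := by omega
    have e4 : (4*Ln)*(d - 2*a₀ + 1) ≤ (4*Ln)*(k*g) := Nat.mul_le_mul_left _ hkg
    have e5 : (4*Ln)*(k*g) = k*(2*ρ) := by rw [hρ]; ring
    have e6 : k*(2*ρ) ≤ k*(2*ρ+1) := Nat.mul_le_mul_left _ (by omega)
    have e7 : 2*d + 8 ≤ 4*(d - 2*a₀ + 1) := by omega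
    have e8 : Ln*(2*d+8) ≤ Ln*(4*(d - 2*a₀ + 1)) := Nat.mul_le_mul_left _ e7
    have e9 : Ln*(4*(d - 2*a₀ + 1)) = (4*Ln)*(d - 2*a₀ + 1) := by ring
    have e10 : Ln*(2*d+8) = 2*(Ln*d) + 8*Ln := by ring
    have e11 : 2*(Ln*d) + 8*Ln ≤ 2*(β.length + 1) := by omega
    have e12 : Ln * d ≤ β.length := by
      have h8 : 8 ≤ 8*Ln := by omega
      omega
    have e13 : ((Ln * d : ℕ) : ℝ) ≤ (β.length : ℝ) := by exact_mod_cast e12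
    have e14 : L * (d:ℝ) ≤ ((Ln:ℕ):ℝ) * (d:ℝ) := by
      apply mul_le_mul_of_nonneg_right hLLn (by positivity)
    push_cast at e13
    linarith
  rcases le_total S₁.card S₂.card with hmaj | hmaj
  · right
    exact hfinal α₂ S₂ (by omega) hc2
  · left
    exact hfinal α₁ S₁ (by omega) hc1
end

section
/- Let G be a finitely generated one-ended group with exponential growth, realized as a Cayley graph X with respect to a finite symmetric generating set. If there exists a constant C such that Div_X(n) ≤ C·n for infinitely many n ∈ ℕ, then X has exponentially many fat bigons. -/
open SimpleGraph

namespace FatBigonAux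

variable {V V' : Type*} {Γ : SimpleGraph V} {Γ' : SimpleGraph V'} {x y : V}

lemma edist_getVert_le (p : Γ.Walk x y) : ∀ {i j : ℕ}, i ≤ j →
    Γ.edist (p.getVert i) (p.getVert j) ≤ (j - i : ℕ) := by
  induction p with
  | nil => intro i j _; simp [SimpleGraph.Walk.getVert]
  | @cons a b c h q ih =>
    intro i j hij
    match i, j with
    | 0, 0 => simp
    | 0, (j+1) =>
      have h1 : Γ.edist a b ≤ (1 : ℕ) := by
        simpa using SimpleGraph.edist_le h.toWalk
      have h2 : Γ.edist b (q.getVert j) ≤ (j : ℕ) := by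
        simpa using ih (Nat.zero_le j)
      calc Γ.edist ((SimpleGraph.Walk.cons h q).getVert 0) ((SimpleGraph.Walk.cons h q).getVert (j+1))
          = Γ.edist a (q.getVert j) := by
            simp [SimpleGraph.Walk.getVert]
        _ ≤ Γ.edist a b + Γ.edist b (q.getVert j) := SimpleGraph.edist_triangle
        _ ≤ (1 : ℕ) + (j : ℕ) := add_le_add h1 h2
        _ = ((j + 1 - 0 : ℕ) : ℕ∞) := by
            push_cast
            ring
    | (i+1), (j+1) =>
      have := ih (Nat.succ_le_succ_iff.mp hij)
      simpa [SimpleGraph.Walk.getVert] using this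

lemma dist_getVert_le_s12 (p : Γ.Walk x y) {i j : ℕ} (hij : i ≤ j) :
    Γ.dist (p.getVert i) (p.getVert j) ≤ j - i := by
  have h := edist_getVert_le p hij
  have := ENat.toNat_le_toNat h (by simp)
  rw [ENat.toNat_coe] at this
  simpa [SimpleGraph.dist] using this

lemma dist_start_getVert_le (p : Γ.Walk x y) (i : ℕ) :
    Γ.dist x (p.getVert i) ≤ i := by
  have := dist_getVert_le_s12 p (Nat.zero_le i)
  simpa [SimpleGraph.Walk.getVert_zero] using this

lemma dist_getVert_end_le (p : Γ.Walk x y) {i : ℕ} (hi : i ≤ p.length) :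
    Γ.dist (p.getVert i) y ≤ p.length - i := by
  have := dist_getVert_le_s12 p hi
  simpa [SimpleGraph.Walk.getVert_length] using this

/-- Geodesic coordinates: on a geodesic, distances between vertices equal index gaps. -/
lemma geodesic_getVert_dist (hconn : Γ.Connected) (p : Γ.Walk x y)
    (hp : p.length = Γ.dist x y) {i j : ℕ} (hij : i ≤ j) (hj : j ≤ p.length) :
    Γ.dist (p.getVert i) (p.getVert j) = j - i := by
  have h1 : Γ.dist x (p.getVert i) ≤ i := dist_start_getVert_le p i
  have h2 : Γ.dist (p.getVert j) y ≤ p.length - j := dist_getVert_end_le p hj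
  have h3 : Γ.dist (p.getVert i) (p.getVert j) ≤ j - i := dist_getVert_le_s12 p hij
  have h4 : Γ.dist x y ≤ Γ.dist x (p.getVert i) + Γ.dist (p.getVert i) (p.getVert j)
      + Γ.dist (p.getVert j) y := by
    calc Γ.dist x y ≤ Γ.dist x (p.getVert j) + Γ.dist (p.getVert j) y :=
          hconn.dist_triangle
      _ ≤ (Γ.dist x (p.getVert i) + Γ.dist (p.getVert i) (p.getVert j)) + Γ.dist (p.getVert j) y := by
          exact Nat.add_le_add_right hconn.dist_triangle _
  omega

lemma geodesic_dist_start_getVert (hconn : Γ.Connected) (p : Γ.Walk x y)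
    (hp : p.length = Γ.dist x y) {i : ℕ} (hi : i ≤ p.length) :
    Γ.dist x (p.getVert i) = i := by
  have := geodesic_getVert_dist hconn p hp (Nat.zero_le i) hi
  simpa [SimpleGraph.Walk.getVert_zero] using this

lemma geodesic_dist_getVert_end (hconn : Γ.Connected) (p : Γ.Walk x y)
    (hp : p.length = Γ.dist x y) {i : ℕ} (hi : i ≤ p.length) :
    Γ.dist (p.getVert i) y = p.length - i := by
  have := geodesic_getVert_dist hconn p hp hi le_rfl
  simpa [SimpleGraph.Walk.getVert_length] using this

lemma dist_add_dist_le_length (p : Γ.Walk x y) {w : V} (hw : w ∈ p.support) :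
    Γ.dist x w + Γ.dist w y ≤ p.length := by
  classical
  have hspec := p.take_spec hw
  have hlen : (p.takeUntil w hw).length + (p.dropUntil w hw).length = p.length := by
    rw [← SimpleGraph.Walk.length_append, hspec]
  have h1 := SimpleGraph.dist_le (p.takeUntil w hw)
  have h2 := SimpleGraph.dist_le (p.dropUntil w hw)
  omega

lemma geodesic_support_dist (hconn : Γ.Connected) (p : Γ.Walk x y)
    (hp : p.length = Γ.dist x y) {w : V} (hw : w ∈ p.support) :
    Γ.dist x w + Γ.dist w y = Γ.dist x y := by
  have h1 := dist_add_dist_le_length p hw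
  have h2 : Γ.dist x y ≤ Γ.dist x w + Γ.dist w y := hconn.dist_triangle
  omega

/-- Isomorphisms preserve graph distance. -/
lemma iso_dist_le (φ : Γ ≃g Γ') (x y : V) :
    Γ'.dist (φ x) (φ y) ≤ Γ.dist x y := by
  by_cases h : Γ.Reachable x y
  · obtain ⟨p, hp⟩ := h.exists_walk_length_eq_dist
    have := SimpleGraph.dist_le (p.map φ.toHom)
    rwa [SimpleGraph.Walk.length_map, hp] at this
  · have h' : ¬ Γ'.Reachable (φ x) (φ y) := by
      intro hr
      have := hr.map φ.symm.toHom
      simpa using h.elim (by simpa using this)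
    simp [SimpleGraph.dist_eq_zero_of_not_reachable h']

lemma iso_dist_eq (φ : Γ ≃g Γ') (x y : V) :
    Γ'.dist (φ x) (φ y) = Γ.dist x y := by
  refine le_antisymm (iso_dist_le φ x y) ?_
  have := iso_dist_le φ.symm (φ x) (φ y)
  simpa using this

section Cayley

variable {A : Type*} [Group A] {S : Set A}

lemma mul_left_cancel_aux (g x y : A) : (g * x)⁻¹ * (g * y) = x⁻¹ * y := by group

def mulLeftIso (S : Set A) (g : A) : cayleyGraph A S ≃g cayleyGraph A S where
  toEquiv := Equiv.mulLeft g
  map_rel_iff' := by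
    intro x y
    simp only [Equiv.coe_mulLeft, cayleyGraph, SimpleGraph.fromRel_adj,
      mul_left_cancel_aux, ne_eq, mul_right_inj]

@[simp] lemma mulLeftIso_apply (g x : A) : (mulLeftIso S g) x = g * x := rfl

lemma dist_mul_left (g x y : A) :
    (cayleyGraph A S).dist (g * x) (g * y) = (cayleyGraph A S).dist x y := by
  have := iso_dist_eq (mulLeftIso S g) x y
  simpa using this

lemma cayley_connected (hSgen : Subgroup.closure S = ⊤) :
    (cayleyGraph A S).Connected := by
  have key : ∀ g : A, (cayleyGraph A S).Reachable 1 g := by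
    intro g
    have hg : g ∈ Subgroup.closure S := by rw [hSgen]; trivial
    induction hg using Subgroup.closure_induction with
    | mem x hxS =>
      by_cases hx1 : x = 1
      · subst hx1; exact SimpleGraph.Reachable.refl 1
      · refine SimpleGraph.Adj.reachable ?_
        refine (SimpleGraph.fromRel_adj _ 1 x).2 ⟨fun h => hx1 h.symm, Or.inl ?_⟩
        simpa using hxS
    | one => exact SimpleGraph.Reachable.refl 1
    | mul x y hx hy rx ry =>
      refine rx.trans ?_
      have := ry.map (mulLeftIso S x).toHom
      simpa using this
    | inv x hx rx =>
      have := (rx.map (mulLeftIso S x⁻¹).toHom).symm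
      simpa using this
  exact (SimpleGraph.connected_iff_exists_forall_reachable _).2 ⟨1, key⟩

end Cayley


section Counting

lemma ncard_prod {α β : Type*} (s : Set α) (t : Set β) :
    (s ×ˢ t).ncard = s.ncard * t.ncard := by
  rw [← Nat.card_coe_set_eq, ← Nat.card_coe_set_eq, ← Nat.card_coe_set_eq,
    Nat.card_congr (Equiv.Set.prod s t), Nat.card_prod]

lemma ncard_le_mul_ncard_image {α β : Type*} {A : Set α} (hA : A.Finite) (f : α → β) (F : ℕ)
    (hF : ∀ b : β, {a | a ∈ A ∧ f a = b}.ncard ≤ F) :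
    A.ncard ≤ F * (f '' A).ncard := by
  classical
  set s := hA.toFinset with hs
  have hcoe : (s : Set α) = A := hA.coe_toFinset
  have hfib : ∀ b ∈ s.image f, (s.filter (fun a => f a = b)).card ≤ F := by
    intro b _
    have hset : ((s.filter (fun a => f a = b) : Finset α) : Set α) = {a | a ∈ A ∧ f a = b} := by
      ext a
      simp only [Finset.coe_filter, Set.mem_setOf_eq, Set.Finite.mem_toFinset, hs]
    have := hF b
    rw [← hset, Set.ncard_coe_finset] at this
    exact this
  have hmain := Finset.card_le_mul_card_image s F hfib
  have h1 : A.ncard = s.card := Set.ncard_eq_toFinset_card A hA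
  have h2 : (f '' A).ncard = (s.image f).card := by
    rw [← Set.ncard_coe_finset (s.image f), Finset.coe_image, hcoe]
  rw [h1, h2]
  exact hmain

end Counting

section RPow

lemma le_pow_of_rpow_inv_le {X y : ℝ} {m : ℕ} (hX : 0 ≤ X) (hm : m ≠ 0)
    (h : X ^ ((m : ℝ)⁻¹) ≤ y) : X ≤ y ^ m := by
  have h0 : (0:ℝ) ≤ X ^ ((m : ℝ)⁻¹) := Real.rpow_nonneg hX _
  have hXeq : (X ^ ((m : ℝ)⁻¹)) ^ m = X := by
    rw [← Real.rpow_natCast (X ^ ((m : ℝ)⁻¹)) m, ← Real.rpow_mul hX,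
      inv_mul_cancel₀ (by exact_mod_cast hm), Real.rpow_one]
  calc X = (X ^ ((m : ℝ)⁻¹)) ^ m := hXeq.symm
    _ ≤ y ^ m := pow_le_pow_left₀ h0 h m

lemma pow_le_of_le_rpow_inv {X y : ℝ} {m : ℕ} (hX : 0 ≤ X) (hy : 0 ≤ y) (hm : m ≠ 0)
    (h : y ≤ X ^ ((m : ℝ)⁻¹)) : y ^ m ≤ X := by
  have hXeq : (X ^ ((m : ℝ)⁻¹)) ^ m = X := by
    rw [← Real.rpow_natCast (X ^ ((m : ℝ)⁻¹)) m, ← Real.rpow_mul hX,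
      inv_mul_cancel₀ (by exact_mod_cast hm), Real.rpow_one]
  calc y ^ m ≤ (X ^ ((m : ℝ)⁻¹)) ^ m := pow_le_pow_left₀ hy h m
    _ = X := hXeq

end RPow

section BigonCore

variable {A : Type*} [Group A] {S : Set A}

lemma isBigonAt_map {V V' : Type*} {Γ : SimpleGraph V} {Γ' : SimpleGraph V'}
    (φ : Γ ≃g Γ') {x₀ x : V} {L s C : ℝ}
    (h : IsBigonAt Γ x₀ L s C x) : IsBigonAt Γ' (φ x₀) L s C (φ x) := by
  obtain ⟨α₁, α₂, h1, h2, hsep⟩ := h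
  have hco : ⇑φ.toHom = ⇑φ := rfl
  refine ⟨α₁.map φ.toHom, α₂.map φ.toHom, ?_, ?_, ?_⟩
  · rw [SimpleGraph.Walk.length_map, iso_dist_eq φ]; exact h1
  · rw [SimpleGraph.Walk.length_map, iso_dist_eq φ]; exact h2
  · intro p hp q hq hcp hcq
    rw [SimpleGraph.Walk.support_map, hco, List.mem_map] at hp hq
    obtain ⟨p', hp', rfl⟩ := hp
    obtain ⟨q', hq', rfl⟩ := hq
    rw [iso_dist_eq φ, iso_dist_eq φ] at hcp hcq
    rw [iso_dist_eq φ]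
    exact hsep p' hp' q' hq' hcp hcq

set_option maxHeartbeats 2000000 in
lemma core_bigon (hconn : (cayleyGraph A S).Connected)
    {n : ℕ} {C s : ℝ} (hC : 0 ≤ C) (hs : 0 ≤ s)
    (hdiv : DivLE (cayleyGraph A S) n (C * (n : ℝ)))
    (hn128 : 128 ≤ n) (hns : 13 * s + 64 ≤ (n : ℝ)) (z : A)
    (hz1 : n / 2 < (cayleyGraph A S).dist 1 z) (hz2 : (cayleyGraph A S).dist 1 z ≤ n) :
    ∃ u v : A,
      (cayleyGraph A S).dist 1 u ≤ (31 * n) / 64 + 2 ∧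
      (cayleyGraph A S).dist v z ≤ (31 * n) / 64 + 2 ∧
      (cayleyGraph A S).dist 1 (u⁻¹ * v) ≤ n / 16 ∧
      IsBigonAt (cayleyGraph A S) 1 (64 * (C + 1) + 1) s s (u⁻¹ * v) := by
  set Γ := cayleyGraph A S with hΓ
  set D := Γ.dist 1 z with hD
  have hD64 : 64 ≤ D := by omega
  set t := D / 2 with ht
  set k := D / 32 with hk
  have hk1 : 1 ≤ k := by omega
  have hkt : k ≤ t := by omega
  have htkD : t + k ≤ D := by omega
  have httD : t ≤ D - t := by omega
  obtain ⟨γ, hγ⟩ := hconn.exists_walk_length_eq_dist 1 z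
  have hγlen : γ.length = D := hγ
  set u := γ.getVert (t - k) with hu
  set c := γ.getVert t with hc
  set v := γ.getVert (t + k) with hv
  have hd1u : Γ.dist 1 u = t - k := by
    have := geodesic_dist_start_getVert hconn γ hγ (i := t - k) (by omega)
    simpa [hγlen] using this
  have hd1c : Γ.dist 1 c = t := by
    have := geodesic_dist_start_getVert hconn γ hγ (i := t) (by omega)
    simpa [hγlen] using this
  have hd1v : Γ.dist 1 v = t + k := by
    have := geodesic_dist_start_getVert hconn γ hγ (i := t + k) (by omega)
    simpa [hγlen] using this
  have hduv : Γ.dist u v = 2 * k := by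
    have := geodesic_getVert_dist hconn γ hγ (i := t - k) (j := t + k) (by omega) (by omega)
    rw [this]; omega
  have hduc : Γ.dist u c = k := by
    have := geodesic_getVert_dist hconn γ hγ (i := t - k) (j := t) (by omega) (by omega)
    rw [this]; omega
  have hdcv : Γ.dist c v = k := by
    have := geodesic_getVert_dist hconn γ hγ (i := t) (j := t + k) (by omega) (by omega)
    rw [this]; omega
  have hdcz : Γ.dist c z = D - t := by
    have := geodesic_dist_getVert_end hconn γ hγ (i := t) (by omega)
    simpa [hγlen] using this
  have hduz : Γ.dist u z = D - (t - k) := by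
    have := geodesic_dist_getVert_end hconn γ hγ (i := t - k) (by omega)
    simpa [hγlen] using this
  have hdvz : Γ.dist v z = D - (t + k) := by
    have := geodesic_dist_getVert_end hconn γ hγ (i := t + k) (by omega)
    simpa [hγlen] using this
  have hc1 : c ≠ 1 := by
    intro h
    rw [h] at hd1c
    simp [SimpleGraph.dist_self] at hd1c
    omega
  have hcz : c ≠ z := by
    intro h
    rw [h] at hdcz
    simp [SimpleGraph.dist_self] at hdcz
    omega
  obtain ⟨W, hWlen, hWavoid⟩ := hdiv 1 z c hz2 hc1 hcz
  have hWavoid' : ∀ p ∈ W.support, ((t : ℕ) : ℝ) / 2 - 2 < (Γ.dist c p : ℝ) := by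
    intro p hp
    have h := hWavoid p hp
    have hd1r : ((t : ℕ) : ℝ) ≤ (Γ.dist c 1 : ℝ) := by
      rw [SimpleGraph.dist_comm (u := c) (v := 1), hd1c]
    have hd2r : ((t : ℕ) : ℝ) ≤ (Γ.dist c z : ℝ) := by
      rw [hdcz]; exact_mod_cast httD
    have h5 : ((t : ℕ) : ℝ) ≤ min ((Γ.dist c 1 : ℕ) : ℝ) ((Γ.dist c z : ℕ) : ℝ) :=
      le_min hd1r hd2r
    linarith
  obtain ⟨σ, hσ⟩ := hconn.exists_walk_length_eq_dist u v
  obtain ⟨τ₁, hτ₁⟩ := hconn.exists_walk_length_eq_dist u 1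
  obtain ⟨τ₂, hτ₂⟩ := hconn.exists_walk_length_eq_dist z v
  have hτ₁len : τ₁.length = t - k := by rw [hτ₁, SimpleGraph.dist_comm]; exact hd1u
  have hτ₂len : τ₂.length = D - (t + k) := by rw [hτ₂, SimpleGraph.dist_comm]; exact hdvz
  set L : ℝ := 64 * (C + 1) + 1 with hL
  have h2k : (n : ℝ) / 64 ≤ ((2 * k : ℕ) : ℝ) := by
    have h : n ≤ 64 * (2 * k) := by omega
    have h' := (Nat.cast_le (α := ℝ)).2 h
    push_cast at h' ⊢
    linarith
  have hDn : (D : ℝ) ≤ (n : ℝ) := by exact_mod_cast hz2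
  have hbigon : IsBigonAt Γ u L s s v := by
    refine ⟨σ, τ₁.append (W.append τ₂), ?_, ?_, ?_⟩
    · rw [hσ, hduv]
      have h0 : (0 : ℝ) ≤ ((2 * k : ℕ) : ℝ) := by positivity
      have h1 : (1 : ℝ) ≤ L := by rw [hL]; linarith
      nlinarith
    · rw [SimpleGraph.Walk.length_append, SimpleGraph.Walk.length_append]
      rw [hduv]
      have hsum : ((τ₁.length + (W.length + τ₂.length) : ℕ) : ℝ)
          = ((t - k : ℕ) : ℝ) + (W.length : ℝ) + ((D - (t + k) : ℕ) : ℝ) := by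
        rw [hτ₁len, hτ₂len]; push_cast; ring
      rw [hsum]
      have e1 : ((t - k : ℕ) : ℝ) + ((D - (t + k) : ℕ) : ℝ) ≤ (n : ℝ) := by
        have h : (t - k) + (D - (t + k)) ≤ n := by omega
        exact_mod_cast h
      have e2 : (W.length : ℝ) ≤ C * n := hWlen
      have e3 : (0 : ℝ) ≤ (n : ℝ) := by positivity
      rw [hL]
      nlinarith [h2k, hC, e1, e2, e3]
    · intro p hp q hq hcp hcq
      have hpσ : Γ.dist u p + Γ.dist p v = 2 * k := by
        have h := geodesic_support_dist hconn σ hσ hp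
        rw [hduv] at h; exact h
      rw [SimpleGraph.Walk.mem_support_append_iff] at hq
      rcases hq with hq | hq
      · -- q on τ₁ : from u to 1
        have hqτ : Γ.dist u q + Γ.dist q 1 = t - k := by
          have h := geodesic_support_dist hconn τ₁ hτ₁ hq
          rw [SimpleGraph.dist_comm (u := u) (v := 1), hd1u] at h; exact h
        have tri1 : Γ.dist 1 v ≤ Γ.dist 1 q + Γ.dist q v := hconn.dist_triangle
        have tri2 : Γ.dist q v ≤ Γ.dist q p + Γ.dist p v := hconn.dist_triangle
        have hq1 : Γ.dist 1 q = Γ.dist q 1 := SimpleGraph.dist_comm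
        have hnat : Γ.dist u q + Γ.dist u p ≤ Γ.dist q p := by omega
        have hpq : Γ.dist p q = Γ.dist q p := SimpleGraph.dist_comm
        have c1 : s < (Γ.dist u p : ℝ) := hcp.1
        have c2 : s < (Γ.dist u q : ℝ) := hcq.1
        have hcast : (Γ.dist u q : ℝ) + (Γ.dist u p : ℝ) ≤ (Γ.dist q p : ℝ) := by
          exact_mod_cast hnat
        rw [hpq]
        linarith
      rw [SimpleGraph.Walk.mem_support_append_iff] at hq
      rcases hq with hq | hq
      · -- q on W
        have hfar : ((t : ℕ) : ℝ) / 2 - 2 < (Γ.dist c q : ℝ) := hWavoid' q hq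
        have h1 : Γ.dist c p ≤ Γ.dist c u + Γ.dist u p := hconn.dist_triangle
        have h2 : Γ.dist c u = k := by rw [SimpleGraph.dist_comm]; exact hduc
        have h3 : Γ.dist u p ≤ 2 * k := by omega
        have h4 : Γ.dist c q ≤ Γ.dist c p + Γ.dist p q := hconn.dist_triangle
        have hcp3k : Γ.dist c p ≤ 3 * k := by omega
        have hr1 : (Γ.dist c q : ℝ) ≤ (Γ.dist c p : ℝ) + (Γ.dist p q : ℝ) := by
          exact_mod_cast h4
        have hr2 : (Γ.dist c p : ℝ) ≤ 3 * (k : ℝ) := by exact_mod_cast hcp3k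
        have hb1 : (D : ℝ) - 1 ≤ 2 * (t : ℝ) := by
          have h : D ≤ 2 * t + 1 := by omega
          have h' := (Nat.cast_le (α := ℝ)).2 h
          push_cast at h'
          linarith
        have hb2 : 32 * (k : ℝ) ≤ (D : ℝ) := by
          have h : 32 * k ≤ D := by omega
          exact_mod_cast h
        have hb3 : (n : ℝ) ≤ 2 * (D : ℝ) := by
          have h : n ≤ 2 * D := by omega
          exact_mod_cast h
        linarith
      · -- q on τ₂ : from z to v
        have hqτ : Γ.dist z q + Γ.dist q v = D - (t + k) := by
          have h := geodesic_support_dist hconn τ₂ hτ₂ hq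
          rw [SimpleGraph.dist_comm (u := z) (v := v), hdvz] at h; exact h
        have tri1 : Γ.dist u z ≤ Γ.dist u p + Γ.dist p z := hconn.dist_triangle
        have tri2 : Γ.dist p z ≤ Γ.dist p q + Γ.dist q z := hconn.dist_triangle
        have hqz : Γ.dist q z = Γ.dist z q := SimpleGraph.dist_comm
        have hnat : Γ.dist p v + Γ.dist q v ≤ Γ.dist p q := by omega
        have c1 : s < (Γ.dist v p : ℝ) := hcp.2
        have c2 : s < (Γ.dist v q : ℝ) := hcq.2
        have hvp : Γ.dist v p = Γ.dist p v := SimpleGraph.dist_comm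
        have hvq : Γ.dist v q = Γ.dist q v := SimpleGraph.dist_comm
        rw [hvp] at c1
        rw [hvq] at c2
        have hcast : (Γ.dist p v : ℝ) + (Γ.dist q v : ℝ) ≤ (Γ.dist p q : ℝ) := by
          exact_mod_cast hnat
        linarith
  have hb1 : IsBigonAt Γ 1 L s s (u⁻¹ * v) := by
    have h := isBigonAt_map (mulLeftIso S u⁻¹) hbigon
    simpa using h
  refine ⟨u, v, ?_, ?_, ?_, hb1⟩
  · rw [hd1u]; omega
  · rw [hdvz]; omega
  · have h := dist_mul_left (S := S) u⁻¹ u v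
    rw [inv_mul_cancel] at h
    rw [← hΓ] at h
    rw [h, hduv]
    omega

end BigonCore

end FatBigonAux


set_option maxHeartbeats 4000000 in
set_option maxRecDepth 8000 in
/-- (Proposition 3.6.) If a finitely generated one-ended group has
exponential growth and `Div_X(n) ≤ C·n` for infinitely many `n`, then its Cayley graph has
exponentially many fat bigons. -/
theorem expGrowth_linDivOnSubsequence_hasExpManyFatBigons
    {G : Type*} [Group G] (S : Set G)
    (hSfin : S.Finite) (hSsymm : S⁻¹ = S) (hSgen : Subgroup.closure S = ⊤)
    (hends : OneEnded (cayleyGraph G S))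
    (hgrowth : HasExpGrowth (cayleyGraph G S) 1)
    (C : ℝ) (hdiv : {n : ℕ | DivLE (cayleyGraph G S) n (C * n)}.Infinite) :
    HasExpManyFatBigons (cayleyGraph G S) 1 := by
  classical
  set Γ := cayleyGraph G S with hΓ
  have hconn : Γ.Connected := FatBigonAux.cayley_connected hSgen
  obtain ⟨a, ha1, hlim⟩ := hgrowth
  have ha0 : (0:ℝ) < a := lt_trans one_pos ha1
  set θ : ℝ := a ^ ((128 : ℝ)⁻¹) with hθdef
  have hθ1 : 1 < θ := by
    rw [hθdef]
    rw [Real.one_lt_rpow_iff_of_pos ha0]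
    exact Or.inl ⟨ha1, by norm_num⟩
  have hθ0 : (0:ℝ) < θ := lt_trans one_pos hθ1
  have hθ128 : θ ^ (128:ℕ) = a := by
    rw [hθdef, ← Real.rpow_natCast (a ^ ((128:ℝ)⁻¹)) 128, ← Real.rpow_mul (le_of_lt ha0)]
    norm_num
  have hmem : Set.Ioo (θ^(127:ℕ)) (θ^(129:ℕ)) ∈ nhds a := by
    apply Ioo_mem_nhds
    · rw [← hθ128]
      exact pow_lt_pow_right₀ hθ1 (by norm_num)
    · rw [← hθ128]
      exact pow_lt_pow_right₀ hθ1 (by norm_num)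
  obtain ⟨N₂, hN₂⟩ := Filter.mem_atTop_sets.mp (Filter.mem_map.mp (hlim hmem))
  have hball : ∀ m : ℕ, max N₂ 1 ≤ m →
      θ^(127*m) ≤ (((gBall Γ 1 m).ncard : ℕ) : ℝ) ∧ (((gBall Γ 1 m).ncard : ℕ) : ℝ) ≤ θ^(129*m) := by
    intro m hm
    have hm1 : m ≠ 0 := by omega
    have hmem' := hN₂ m (le_trans (le_max_left _ _) hm)
    simp only [Set.mem_preimage, Set.mem_Ioo] at hmem'
    have hXnn : (0:ℝ) ≤ (((gBall Γ 1 m).ncard : ℕ) : ℝ) := by positivity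
    constructor
    · have h1 := FatBigonAux.pow_le_of_le_rpow_inv hXnn (by positivity) hm1 (le_of_lt hmem'.1)
      rw [← pow_mul] at h1
      exact h1
    · have h2 := FatBigonAux.le_pow_of_rpow_inv_le hXnn hm1 (le_of_lt hmem'.2)
      rw [← pow_mul] at h2
      exact h2
  have hfin : ∀ m : ℕ, (gBall Γ 1 m).Finite := by
    intro m
    by_contra hinf
    set m' := max (max N₂ 1) m with hm'
    have hsub : gBall Γ 1 m ⊆ gBall Γ 1 m' := by
      intro x hx
      have hx' : Γ.dist 1 x ≤ m := hx
      have : Γ.dist 1 x ≤ m' := le_trans hx' (le_max_right _ _)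
      exact this
    have hinf' : (gBall Γ 1 m').Infinite := fun hf => hinf (hf.subset hsub)
    have h0 : (((gBall Γ 1 m').ncard : ℕ) : ℝ) = 0 := by
      rw [hinf'.ncard]; norm_num
    have hlo := (hball m' (le_max_left _ _)).1
    rw [h0] at hlo
    have hpos : (0:ℝ) < θ^(127*m') := pow_pos hθ0 _
    linarith
  have hone : ∀ m : ℕ, (1:G) ∈ gBall Γ 1 m := by
    intro m
    show Γ.dist 1 1 ≤ m
    simp [SimpleGraph.dist_self]
  have hCnn : 0 ≤ C := by
    by_contra hCneg
    push_neg at hCneg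
    obtain ⟨g, hg, hgne⟩ : ∃ g ∈ gBall Γ 1 (max N₂ 1), g ≠ 1 := by
      by_contra hno
      push_neg at hno
      have hsub1 : gBall Γ 1 (max N₂ 1) ⊆ {1} := fun x hx => hno x hx
      have hle := Set.ncard_le_ncard hsub1 (Set.finite_singleton 1)
      rw [Set.ncard_singleton] at hle
      have hlo := (hball (max N₂ 1) le_rfl).1
      have h1 : (1:ℝ) < θ^(127 * max N₂ 1) := by
        apply one_lt_pow₀ hθ1
        have : 1 ≤ max N₂ 1 := le_max_right _ _
        omega
      have : (((gBall Γ 1 (max N₂ 1)).ncard : ℕ) : ℝ) ≤ 1 := by exact_mod_cast hle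
      linarith
    obtain ⟨n, hnE, hn1⟩ : ∃ n, DivLE Γ n (C * n) ∧ 1 ≤ n := by
      by_contra hno
      push_neg at hno
      apply hdiv
      apply Set.Finite.subset (Set.finite_Iic 0)
      intro n hn
      have := hno n hn
      simp only [Set.mem_Iic]
      omega
    obtain ⟨w, hwlen, _⟩ := hnE 1 1 g (by simp [SimpleGraph.dist_self]) hgne hgne
    have hw0 : (0:ℝ) ≤ (w.length : ℝ) := by positivity
    have hn1' : (1:ℝ) ≤ (n:ℝ) := by exact_mod_cast hn1
    nlinarith
  set L : ℝ := 64 * (C + 1) + 1 with hLdef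
  have hL1 : 1 < L := by rw [hLdef]; linarith
  refine ⟨0, θ, L, le_rfl, hθ1, hL1, ?_⟩
  intro s hs
  refine ⟨s, hs, ?_⟩
  obtain ⟨Ns, hNs⟩ := exists_nat_ge (13 * s + 64)
  obtain ⟨N₄, hN₄⟩ := pow_unbounded_of_one_lt (2:ℝ) hθ1
  -- the target set is unbounded
  have hkey : ∀ M : ℕ, ∃ r, M < r ∧
      θ ^ r ≤ (((bigonSet Γ 1 L s s ∩ gBall Γ 1 r).ncard : ℕ) : ℝ) := by
    intro M
    set N₃ : ℕ := Ns + N₄ + 64 * (N₂ + 1) + 16 * M + 700 with hN₃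
    obtain ⟨n, hnE, hnN₃⟩ : ∃ n, DivLE Γ n (C * n) ∧ N₃ ≤ n := by
      by_contra hno
      push_neg at hno
      apply hdiv
      apply Set.Finite.subset (Set.finite_Iic N₃)
      intro n hn
      have := hno n hn
      simp only [Set.mem_Iic]
      omega
    set h : ℕ := n / 2 with hh
    set r : ℕ := n / 16 + 1 with hr
    set M' : ℕ := (31 * n) / 64 + 2 with hM'
    set B' := gBall Γ 1 M' with hB'
    set F : ℕ := B'.ncard * B'.ncard with hF
    set A : Set G := gBall Γ 1 n \ gBall Γ 1 h with hA
    have hAfin : A.Finite := (hfin n).subset Set.diff_subset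
    have hns : 13 * s + 64 ≤ (n : ℝ) := by
      have : (Ns : ℝ) ≤ (n : ℝ) := by
        have : Ns ≤ n := by omega
        exact_mod_cast this
      linarith
    have hn128 : 128 ≤ n := by omega
    -- the bigon construction
    have key : ∀ z : G, ∃ p : G × G, z ∈ A →
        Γ.dist 1 p.1 ≤ M' ∧ Γ.dist p.2 z ≤ M' ∧
        Γ.dist 1 (p.1⁻¹ * p.2) ≤ n / 16 ∧ IsBigonAt Γ 1 L s s (p.1⁻¹ * p.2) := by
      intro z
      by_cases hz : z ∈ A
      · have hz2 : Γ.dist 1 z ≤ n := hz.1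
        have hz1 : n / 2 < Γ.dist 1 z := by
          have := hz.2
          have hnot : ¬ (Γ.dist 1 z ≤ h) := this
          omega
        obtain ⟨u, v, h1, h2, h3, h4⟩ :=
          FatBigonAux.core_bigon hconn hCnn hs hnE hn128 hns z hz1 hz2
        exact ⟨(u, v), fun _ => ⟨h1, h2, h3, h4⟩⟩
      · exact ⟨(1, 1), fun hzA => absurd hzA hz⟩
    set f : G → G := fun z => ((key z).choose.1)⁻¹ * (key z).choose.2 with hf
    have himg : f '' A ⊆ bigonSet Γ 1 L s s ∩ gBall Γ 1 r := by
      rintro x ⟨z, hzA, rfl⟩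
      obtain ⟨hp1, hp2, hp3, hp4⟩ := (key z).choose_spec hzA
      constructor
      · exact hp4
      · have hp3' : Γ.dist 1 (f z) ≤ n / 16 := hp3
        show Γ.dist 1 (f z) ≤ r
        omega
    have hfibre : ∀ b : G, {z | z ∈ A ∧ f z = b}.ncard ≤ F := by
      intro b
      have hsubfib : {z | z ∈ A ∧ f z = b} ⊆
          (fun pq : G × G => pq.1 * b * pq.2) '' (B' ×ˢ B') := by
        rintro z ⟨hzA, hzb⟩
        obtain ⟨hp1, hp2, hp3, hp4⟩ := (key z).choose_spec hzA
        set u := (key z).choose.1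
        set v := (key z).choose.2
        refine ⟨(u, v⁻¹ * z), ⟨hp1, ?_⟩, ?_⟩
        · show Γ.dist 1 (v⁻¹ * z) ≤ M'
          have hd := FatBigonAux.dist_mul_left (S := S) v⁻¹ v z
          rw [inv_mul_cancel, ← hΓ] at hd
          rw [← hd] at hp2
          exact hp2
        · show u * b * (v⁻¹ * z) = z
          have hfz : f z = u⁻¹ * v := rfl
          rw [← hzb, hfz]
          group
      have hprodfin : (B' ×ˢ B' : Set (G × G)).Finite := (hfin M').prod (hfin M')
      calc {z | z ∈ A ∧ f z = b}.ncard
          ≤ ((fun pq : G × G => pq.1 * b * pq.2) '' (B' ×ˢ B')).ncard :=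
            Set.ncard_le_ncard hsubfib (hprodfin.image _)
        _ ≤ (B' ×ˢ B' : Set (G × G)).ncard := Set.ncard_image_le hprodfin
        _ = F := by rw [FatBigonAux.ncard_prod]
    have hcount := FatBigonAux.ncard_le_mul_ncard_image hAfin f F hfibre
    -- numeric bounds
    have hN2n : max N₂ 1 ≤ n := by omega
    have hN2h : max N₂ 1 ≤ h := by omega
    have hN2M' : max N₂ 1 ≤ M' := by omega
    have hBn := hball n hN2n
    have hBh := hball h hN2h
    have hBM' := hball M' hN2M'
    have hsubhn : gBall Γ 1 h ⊆ gBall Γ 1 n := by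
      intro x hx
      have hx' : Γ.dist 1 x ≤ h := hx
      show Γ.dist 1 x ≤ n
      omega
    have hAcard : ((A.ncard : ℕ) : ℝ)
        = (((gBall Γ 1 n).ncard : ℕ) : ℝ) - (((gBall Γ 1 h).ncard : ℕ) : ℝ) := by
      rw [hA, Set.ncard_diff hsubhn (hfin h),
        Nat.cast_sub (Set.ncard_le_ncard hsubhn (hfin n))]
    have hchain : θ ^ r ≤ (((f '' A).ncard : ℕ) : ℝ) := by
      have h1B : 1 ≤ B'.ncard := by
        exact (Set.ncard_pos (hfin M')).2 ⟨1, hone M'⟩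
      have hF1 : 1 ≤ F := by
        have := Nat.mul_le_mul h1B h1B
        simpa [hF] using this
      have hmono : ∀ {i j : ℕ}, i ≤ j → θ^i ≤ θ^j :=
        fun hij => pow_le_pow_right₀ (le_of_lt hθ1) hij
      have hFr : (F : ℝ) ≤ θ ^ (258 * M') := by
        have hB2 := hBM'.2
        have hnn : (0:ℝ) ≤ ((B'.ncard : ℕ) : ℝ) := by positivity
        rw [hF]
        push_cast
        calc ((B'.ncard : ℕ) : ℝ) * ((B'.ncard : ℕ) : ℝ)
            ≤ θ^(129*M') * θ^(129*M') := mul_le_mul hB2 hB2 hnn (pow_nonneg hθ0.le _)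
          _ = θ^(258*M') := by rw [← pow_add]; congr 1; ring
      have hexp1 : r + 258 * M' ≤ 126 * n := by omega
      have hexp2 : 129 * h ≤ 126 * n := by omega
      have h2θ : (2:ℝ) ≤ θ ^ n := by
        calc (2:ℝ) ≤ θ ^ N₄ := le_of_lt hN₄
          _ ≤ θ ^ n := hmono (by omega)
      have hstep1 : θ ^ r * (F:ℝ) ≤ θ ^ (126 * n) := by
        calc θ ^ r * (F:ℝ) ≤ θ ^ r * θ^(258*M') :=
              mul_le_mul_of_nonneg_left hFr (by positivity)
          _ = θ ^ (r + 258*M') := (pow_add θ r (258*M')).symm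
          _ ≤ θ ^ (126*n) := hmono hexp1
      have hstep2 : θ ^ (126*n) + θ^(129*h) ≤ θ^(127*n) := by
        have hh2 : θ^(129*h) ≤ θ^(126*n) := hmono hexp2
        calc θ^(126*n) + θ^(129*h) ≤ 2 * θ^(126*n) := by linarith
          _ ≤ θ^n * θ^(126*n) := mul_le_mul_of_nonneg_right h2θ (by positivity)
          _ = θ^(n + 126*n) := (pow_add θ n (126*n)).symm
          _ = θ^(127*n) := by congr 1; ring
      have hup : θ ^ r * (F:ℝ) + (((gBall Γ 1 h).ncard:ℕ):ℝ)
          ≤ (((gBall Γ 1 n).ncard:ℕ):ℝ) := by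
        have hu1 := hBh.2
        have hu2 := hBn.1
        linarith
      have hAc : θ ^ r * (F:ℝ) ≤ ((A.ncard:ℕ):ℝ) := by
        rw [hAcard]; linarith
      have hcount' : ((A.ncard:ℕ):ℝ) ≤ (F:ℝ) * (((f '' A).ncard:ℕ):ℝ) := by
        exact_mod_cast hcount
      have hFpos : (0:ℝ) < (F:ℝ) := by
        have : (1:ℝ) ≤ (F:ℝ) := by exact_mod_cast hF1
        linarith
      have hmul : θ ^ r * (F:ℝ) ≤ (((f '' A).ncard:ℕ):ℝ) * (F:ℝ) := by
        calc θ ^ r * (F:ℝ) ≤ (F:ℝ) * (((f '' A).ncard:ℕ):ℝ) := le_trans hAc hcount'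
          _ = (((f '' A).ncard:ℕ):ℝ) * (F:ℝ) := by ring
      exact le_of_mul_le_mul_right hmul hFpos
    have hfinal : (((f '' A).ncard:ℕ):ℝ)
        ≤ (((bigonSet Γ 1 L s s ∩ gBall Γ 1 r).ncard:ℕ):ℝ) := by
      exact_mod_cast Set.ncard_le_ncard himg
        (Set.Finite.subset (hfin r) Set.inter_subset_right)
    exact ⟨r, by omega, le_trans hchain hfinal⟩
  -- conclude infiniteness
  have hsetinf : {m : ℕ | θ ^ m ≤ (((bigonSet Γ 1 L s s ∩ gBall Γ 1 m).ncard : ℕ) : ℝ)}.Infinite := by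
    intro hfin'
    obtain ⟨b, hb⟩ := hfin'.bddAbove
    obtain ⟨r, hrM, hrmem⟩ := hkey b
    have := hb hrmem
    omega
  exact hsetinf
end

section
/- Any finitely generated one-ended group with exponential growth and linear divergence admits exponentially many fat bigons (in any Cayley graph with respect to a finite symmetric generating set). -/
set_option maxHeartbeats 2000000


open SimpleGraph

section Aux

variable {G : Type*} [Group G] {S : Set G}

/-- Left translation as a graph isomorphism of the Cayley graph. -/
def fatMulIso (S : Set G) (g : G) : cayleyGraph G S ≃g cayleyGraph G S where
  toEquiv := Equiv.mulLeft g
  map_rel_iff' := by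
    intro x y
    show (cayleyGraph G S).Adj (g * x) (g * y) ↔ (cayleyGraph G S).Adj x y
    unfold cayleyGraph
    rw [SimpleGraph.fromRel_adj, SimpleGraph.fromRel_adj]
    constructor
    · rintro ⟨hne, h⟩
      refine ⟨fun he => hne (by rw [he]), ?_⟩
      simpa [mul_assoc] using h
    · rintro ⟨hne, h⟩
      refine ⟨fun he => hne (mul_left_cancel he), ?_⟩
      simpa [mul_assoc] using h

lemma fatIso_dist_le {V W : Type*} {A : SimpleGraph V} {B : SimpleGraph W}
    (f : A ≃g B) (x y : V) : B.dist (f x) (f y) ≤ A.dist x y := by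
  by_cases h : A.Reachable x y
  · obtain ⟨p, hp⟩ := h.exists_walk_length_eq_dist
    calc B.dist (f x) (f y) ≤ (p.map f.toHom).length := SimpleGraph.dist_le _
    _ = A.dist x y := by rw [SimpleGraph.Walk.length_map, hp]
  · rw [SimpleGraph.dist_eq_zero_of_not_reachable h,
      SimpleGraph.dist_eq_zero_of_not_reachable]
    intro hr
    obtain ⟨q⟩ := hr
    exact h ⟨(q.map f.symm.toHom).copy (by simp) (by simp)⟩

lemma fatIso_dist_eq {V W : Type*} {A : SimpleGraph V} {B : SimpleGraph W}
    (f : A ≃g B) (x y : V) : B.dist (f x) (f y) = A.dist x y := by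
  refine le_antisymm (fatIso_dist_le f x y) ?_
  have := fatIso_dist_le f.symm (f x) (f y)
  simpa using this

lemma fat_dist_mul (S : Set G) (g x y : G) :
    (cayleyGraph G S).dist (g * x) (g * y) = (cayleyGraph G S).dist x y :=
  fatIso_dist_eq (fatMulIso S g) x y

lemma fat_reachable_mul (g : G) {x y : G}
    (h : (cayleyGraph G S).Reachable x y) :
    (cayleyGraph G S).Reachable (g * x) (g * y) := by
  obtain ⟨p⟩ := h
  exact ⟨p.map (fatMulIso S g).toHom⟩

lemma fat_connected (hSgen : Subgroup.closure S = ⊤) :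
    (cayleyGraph G S).Connected := by
  have key : ∀ g : G, (cayleyGraph G S).Reachable 1 g := by
    intro g
    have hg : g ∈ Subgroup.closure S := by rw [hSgen]; trivial
    induction hg using Subgroup.closure_induction with
    | mem x hx =>
      by_cases hx1 : x = 1
      · rw [hx1]
      · exact SimpleGraph.Adj.reachable ⟨fun h => hx1 h.symm, Or.inl (by simpa using hx)⟩
    | one => rfl
    | mul x y _ _ hx hy =>
      exact hx.trans (by simpa using fat_reachable_mul (S := S) x hy)
    | inv x _ hx =>
      have := fat_reachable_mul (S := S) x⁻¹ hx
      simpa using this.symm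
  constructor
  intro u v
  have := fat_reachable_mul (S := S) u (key (u⁻¹ * v))
  simpa using this

end Aux

section Aux2
variable {V : Type*} {A : SimpleGraph V}

lemma fat_dist_split {a b u : V} (w : A.Walk a b) (hu : u ∈ w.support) :
    A.dist a u + A.dist u b ≤ w.length := by
  classical
  have h := w.take_spec hu
  have hlen : (w.takeUntil u hu).length + (w.dropUntil u hu).length = w.length := by
    rw [← SimpleGraph.Walk.length_append, h]
  calc A.dist a u + A.dist u b
      ≤ (w.takeUntil u hu).length + (w.dropUntil u hu).length :=
        Nat.add_le_add (SimpleGraph.dist_le _) (SimpleGraph.dist_le _)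
  _ = w.length := hlen

/-- On a geodesic walk, distances split exactly at every support vertex. -/
lemma fat_geodesic_split (hc : A.Connected) {a b u : V} (w : A.Walk a b)
    (hw : w.length = A.dist a b) (hu : u ∈ w.support) :
    A.dist a u + A.dist u b = A.dist a b := by
  have h1 := fat_dist_split w hu
  have h2 := hc.dist_triangle (u := a) (v := u) (w := b)
  omega

lemma fat_exists_on_walk {a b : V} (w : A.Walk a b) :
    ∀ t : ℕ, t ≤ w.length → ∃ u ∈ w.support,
      ∃ w1 : A.Walk a u, ∃ w2 : A.Walk u b, w1.length ≤ t ∧ w2.length + t ≤ w.length := by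
  induction w with
  | nil =>
    intro t ht
    exact ⟨_, by simp, SimpleGraph.Walk.nil, SimpleGraph.Walk.nil, by simp, by simpa using ht⟩
  | @cons x y z h p ih =>
    intro t ht
    match t with
    | 0 =>
      exact ⟨x, by simp, SimpleGraph.Walk.nil, SimpleGraph.Walk.cons h p, by simp, by simp⟩
    | (t' + 1) =>
      obtain ⟨u, hu, w1, w2, h1, h2⟩ := ih t' (by simpa [Nat.succ_le_succ_iff] using ht)
      refine ⟨u, by simp [hu], SimpleGraph.Walk.cons h w1, w2, by simpa using h1, ?_⟩
      simp only [SimpleGraph.Walk.length_cons]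
      omega

/-- In a connected graph we can find points at exact intermediate distances. -/
lemma fat_exists_mid (hc : A.Connected) (a b : V) (t : ℕ) (ht : t ≤ A.dist a b) :
    ∃ u : V, A.dist a u = t ∧ A.dist u b + t = A.dist a b := by
  obtain ⟨p, hp⟩ := (hc a b).exists_walk_length_eq_dist
  obtain ⟨u, hu, w1, w2, h1, h2⟩ := fat_exists_on_walk p t (by omega)
  have d1 : A.dist a u ≤ t := le_trans (SimpleGraph.dist_le w1) h1
  have d2 : A.dist u b ≤ w2.length := SimpleGraph.dist_le w2
  have h3 := hc.dist_triangle (u := a) (v := u) (w := b)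
  exact ⟨u, by omega, by omega⟩

end Aux2

section Aux3
variable {G : Type*} [Group G] {S : Set G}

lemma fat_nbr_finite (hSfin : S.Finite) (v : G) :
    {u | (cayleyGraph G S).Adj v u}.Finite := by
  have : {u | (cayleyGraph G S).Adj v u} ⊆ (fun a => v * a) '' (S ∪ S⁻¹) := by
    rintro u ⟨hne, h⟩
    rcases h with h | h
    · exact ⟨v⁻¹ * u, Or.inl h, by group⟩
    · refine ⟨v⁻¹ * u, Or.inr ?_, by group⟩
      simpa using h
  exact ((hSfin.union hSfin.inv).image _).subset this

lemma fat_ball_finite (hSfin : S.Finite) (hc : (cayleyGraph G S).Connected) (N : ℕ) :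
    (gBall (cayleyGraph G S) 1 N).Finite := by
  induction N with
  | zero =>
    have : gBall (cayleyGraph G S) 1 0 ⊆ {(1 : G)} := by
      intro u hu
      have : (cayleyGraph G S).dist 1 u = 0 := Nat.le_zero.mp hu
      have := (hc.dist_eq_zero_iff (u := 1) (v := u)).mp this
      simp [this.symm]
    exact (Set.finite_singleton _).subset this
  | succ N ih =>
    have hsub : gBall (cayleyGraph G S) 1 (N + 1) ⊆
        gBall (cayleyGraph G S) 1 N ∪
          ⋃ v ∈ gBall (cayleyGraph G S) 1 N, {u | (cayleyGraph G S).Adj v u} := by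
      intro u hu
      by_cases h : (cayleyGraph G S).dist 1 u ≤ N
      · exact Or.inl h
      · have hd : (cayleyGraph G S).dist 1 u = N + 1 := le_antisymm hu (by omega)
        obtain ⟨v, hv1, hv2⟩ := fat_exists_mid hc 1 u N (by omega)
        have hadj : (cayleyGraph G S).dist v u = 1 := by omega
        refine Or.inr (Set.mem_biUnion hv1.le ?_)
        exact (SimpleGraph.dist_eq_one_iff_adj).mp hadj
    exact (ih.union (ih.biUnion (fun v _ => fat_nbr_finite hSfin v))).subset hsub

end Aux3

section Aux4
variable {V : Type*} {X : SimpleGraph V} {o : V}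

/-- The key geometric lemma: a "collinear configuration" w — o — x — y together with a
divergence detour produces an `(L,s,s)`-bigon at `x`. -/
lemma fat_good_isBigon (hc : X.Connected)
    {Cd : ℝ} (hdiv : ∀ n : ℕ, DivLE X n (Cd * n))
    {s : ℝ} (hs : 0 ≤ s) (x w y : V)
    (hcol : X.dist w y = X.dist w o + X.dist o x + X.dist x y)
    (hk1 : 2*(X.dist o x : ℝ) + 2*s + 10 ≤ (X.dist w o : ℝ))
    (hk2 : (X.dist w o : ℝ) ≤ 6*(X.dist o x : ℝ))
    (hl1 : (X.dist o x : ℝ) + 2*s + 10 ≤ (X.dist x y : ℝ))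
    (hl2 : (X.dist x y : ℝ) ≤ 6 * (X.dist o x : ℝ)) :
    IsBigonAt X o (13 * max Cd 1 + 13) s s x := by
  set n' := X.dist o x with hn'
  set k := X.dist w o with hk
  set l := X.dist x y with hl
  have hn0 : (0:ℝ) ≤ (n' : ℝ) := Nat.cast_nonneg _
  have hk10 : 10 ≤ k := by exact_mod_cast (by linarith : (10:ℝ) ≤ (k:ℝ))
  have hl10 : 10 ≤ l := by exact_mod_cast (by linarith : (10:ℝ) ≤ (l:ℝ))
  have hn1 : 1 ≤ n' := by
    by_contra h
    have : n' = 0 := by omega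
    rw [this] at hk2
    simp at hk2
    have : (10:ℝ) ≤ 0 := by linarith
    linarith
  -- derived exact distances
  have hdwx : X.dist w x = k + n' := by
    have h1 : X.dist w x ≤ X.dist w o + X.dist o x := hc.dist_triangle
    have h2 : X.dist w y ≤ X.dist w x + X.dist x y := hc.dist_triangle
    omega
  have hd1y : X.dist o y = n' + l := by
    have h1 : X.dist o y ≤ X.dist o x + X.dist x y := hc.dist_triangle
    have h2 : X.dist w y ≤ X.dist w o + X.dist o y := hc.dist_triangle
    omega
  have how : o ≠ w := by
    intro h
    rw [← h] at hk
    rw [SimpleGraph.dist_self] at hk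
    omega
  have hoy : o ≠ y := by
    intro h
    rw [← h] at hd1y
    rw [SimpleGraph.dist_self] at hd1y
    omega
  -- the divergence detour
  obtain ⟨T, hT1, hT2⟩ := hdiv (X.dist w y) w y o le_rfl how hoy
  -- geodesics
  obtain ⟨Aw, hAw⟩ := (hc o w).exists_walk_length_eq_dist
  obtain ⟨Dw, hDw⟩ := (hc y x).exists_walk_length_eq_dist
  obtain ⟨α₁, hα₁⟩ := (hc o x).exists_walk_length_eq_dist
  have hdwy_c : X.dist w y = k + n' + l := by omega
  have hCd0 : 0 ≤ Cd := by
    by_contra h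
    push_neg at h
    have h0 : (0:ℝ) ≤ (T.length : ℝ) := Nat.cast_nonneg _
    have h1 : (0:ℝ) < (X.dist w y : ℝ) := by
      rw [hdwy_c]; push_cast; linarith
    nlinarith
  have hM : 1 ≤ max Cd 1 := le_max_right _ _
  refine ⟨α₁, Aw.append (T.append Dw), ?_, ?_, ?_⟩
  · rw [hα₁]
    have : (1:ℝ) ≤ 13 * max Cd 1 + 13 := by linarith
    nlinarith
  · have hlen : ((Aw.append (T.append Dw)).length : ℝ) = (k:ℝ) + (T.length:ℝ) + (l:ℝ) := by
      rw [SimpleGraph.Walk.length_append, SimpleGraph.Walk.length_append]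
      push_cast
      rw [hAw, hDw]
      rw [SimpleGraph.dist_comm (u := o) (v := w), SimpleGraph.dist_comm (u := y) (v := x)]
      push_cast
      ring
    rw [hlen]
    have hdc : (X.dist w y : ℝ) = (k:ℝ) + (n':ℝ) + (l:ℝ) := by exact_mod_cast hdwy_c
    have hT1' : (T.length : ℝ) ≤ Cd * ((k:ℝ) + (n':ℝ) + (l:ℝ)) := by rw [← hdc]; exact hT1
    have h13 : (k:ℝ) + (n':ℝ) + (l:ℝ) ≤ 13 * (n':ℝ) := by linarith
    have hTb : (T.length : ℝ) ≤ max Cd 1 * (13 * (n':ℝ)) := by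
      calc (T.length : ℝ) ≤ Cd * ((k:ℝ) + (n':ℝ) + (l:ℝ)) := hT1'
      _ ≤ max Cd 1 * (13 * (n':ℝ)) := by
          have := le_max_left Cd 1
          nlinarith
    linarith
  · intro u hu v hv h1 h2
    have husplit : X.dist o u + X.dist u x = n' := fat_geodesic_split hc α₁ hα₁ hu
    have hdu1 : X.dist o u ≤ n' := by omega
    rw [SimpleGraph.Walk.mem_support_append_iff] at hv
    rcases hv with hv | hv
    · -- v on the geodesic from o to w
      have hvsplit : X.dist o v + X.dist v w = k := by
        have := fat_geodesic_split hc Aw hAw hv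
        rw [SimpleGraph.dist_comm (u := o) (v := w)] at this
        omega
      have htr1 : X.dist w x ≤ X.dist w v + X.dist v x := hc.dist_triangle
      have htr2 : X.dist v x ≤ X.dist v u + X.dist u x := hc.dist_triangle
      have hwv : X.dist w v = X.dist v w := SimpleGraph.dist_comm
      have hvu : X.dist v u = X.dist u v := SimpleGraph.dist_comm
      have key : X.dist o v ≤ X.dist u v := by omega
      have : (X.dist o v : ℝ) ≤ (X.dist u v : ℝ) := by exact_mod_cast key
      linarith [h2.1]
    rw [SimpleGraph.Walk.mem_support_append_iff] at hv
    rcases hv with hv | hv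
    · -- v on the divergence detour
      have how' : (X.dist o w : ℝ) = (k : ℝ) := by rw [SimpleGraph.dist_comm]
      have hoy' : (X.dist o y : ℝ) = (n' : ℝ) + (l : ℝ) := by exact_mod_cast hd1y
      have hmin : (2*(n':ℝ) + 2*s + 10) ≤ min ((X.dist o w : ℕ) : ℝ) ((X.dist o y : ℕ) : ℝ) := by
        rw [le_min_iff]
        constructor
        · rw [how']; linarith
        · rw [hoy']; linarith
      have hTv := hT2 v hv
      have hdv : (n':ℝ) + s + 3 < (X.dist o v : ℝ) := by
        have := min_le_left ((X.dist o w : ℕ) : ℝ) ((X.dist o y : ℕ) : ℝ)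
        linarith [hTv, hmin]
      have htr : (X.dist o v : ℝ) ≤ (X.dist o u : ℝ) + (X.dist u v : ℝ) := by
        exact_mod_cast hc.dist_triangle
      have hdu1' : (X.dist o u : ℝ) ≤ (n' : ℝ) := by exact_mod_cast hdu1
      linarith
    · -- v on the geodesic from y to x
      have hvsplit : X.dist y v + X.dist v x = l := by
        have := fat_geodesic_split hc Dw hDw hv
        rw [SimpleGraph.dist_comm (u := y) (v := x)] at this
        omega
      have htr1 : X.dist o y ≤ X.dist o u + X.dist u y := hc.dist_triangle
      have htr2 : X.dist u y ≤ X.dist u v + X.dist v y := hc.dist_triangle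
      have hvy : X.dist v y = X.dist y v := SimpleGraph.dist_comm
      have hxv : X.dist x v = X.dist v x := SimpleGraph.dist_comm
      have key : X.dist x v ≤ X.dist u v := by omega
      have : (X.dist x v : ℝ) ≤ (X.dist u v : ℝ) := by exact_mod_cast key
      linarith [h2.2]

end Aux4

section Aux5

lemma fat_growth (a : ℝ) (ha : 1 < a) (bn : ℕ → ℝ) (hbn : ∀ N, 0 ≤ bn N)
    (hlim : Filter.Tendsto (fun n : ℕ => (bn n) ^ ((n : ℝ)⁻¹)) Filter.atTop (nhds a)) :
    ∃ N₀ : ℕ, 1 ≤ N₀ ∧ ∀ N, N₀ ≤ N →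
      a ^ ((199:ℝ)/200 * N) ≤ bn N ∧ bn N ≤ a ^ ((201:ℝ)/200 * N) := by
  have ha0 : (0:ℝ) < a := lt_trans zero_lt_one ha
  set a₁ := a ^ ((199:ℝ)/200) with ha₁def
  set a₂ := a ^ ((201:ℝ)/200) with ha₂def
  have ha₁a : a₁ < a := by
    rw [ha₁def]
    nth_rewrite 2 [← Real.rpow_one a]
    exact (Real.rpow_lt_rpow_left_iff ha).mpr (by norm_num)
  have haa₂ : a < a₂ := by
    rw [ha₂def]
    nth_rewrite 1 [← Real.rpow_one a]
    exact (Real.rpow_lt_rpow_left_iff ha).mpr (by norm_num)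
  have h1 := hlim.eventually (eventually_ge_nhds ha₁a)
  have h2 := hlim.eventually (eventually_le_nhds haa₂)
  obtain ⟨N1, hh1⟩ := Filter.eventually_atTop.mp h1
  obtain ⟨N2, hh2⟩ := Filter.eventually_atTop.mp h2
  refine ⟨max 1 (max N1 N2), le_max_left _ _, fun N hN => ?_⟩
  have hN1 : N1 ≤ N := le_trans (le_trans (le_max_left _ _) (le_max_right _ _)) hN
  have hN2 : N2 ≤ N := le_trans (le_trans (le_max_right _ _) (le_max_right _ _)) hN
  have hNpos : (1:ℕ) ≤ N := le_trans (le_max_left _ _) hN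
  have hNne : ((N:ℝ)) ≠ 0 := Nat.cast_ne_zero.mpr (by omega)
  have hfix : ((bn N) ^ ((N : ℝ)⁻¹)) ^ ((N:ℕ):ℝ) = bn N := by
    rw [← Real.rpow_mul (hbn N), inv_mul_cancel₀ hNne, Real.rpow_one]
  constructor
  · have := Real.rpow_le_rpow (le_of_lt (lt_trans zero_lt_one (by
        rw [ha₁def]; exact Real.one_lt_rpow_iff_of_pos ha0 |>.mpr (Or.inl ⟨ha, by norm_num⟩))))
      (hh1 N hN1) (Nat.cast_nonneg N)
    rw [hfix] at this
    calc a ^ ((199:ℝ)/200 * N) = a₁ ^ ((N:ℕ):ℝ) := by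
          rw [ha₁def, ← Real.rpow_mul (le_of_lt ha0)]
    _ ≤ bn N := this
  · have := Real.rpow_le_rpow (Real.rpow_nonneg (hbn N) _) (hh2 N hN2) (Nat.cast_nonneg N)
    rw [hfix] at this
    calc bn N ≤ a₂ ^ ((N:ℕ):ℝ) := this
    _ = a ^ ((201:ℝ)/200 * N) := by rw [ha₂def, ← Real.rpow_mul (le_of_lt ha0)]

end Aux5

section Aux6
variable {G : Type*} [Group G] {S : Set G}

lemma fat_make_good
    (hc : (cayleyGraph G S).Connected)
    {Cd : ℝ} (hdiv : ∀ n : ℕ, DivLE (cayleyGraph G S) n (Cd * n))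
    {s : ℝ} (hs : 0 ≤ s) (sN : ℕ) (hsN : s ≤ (sN:ℝ))
    (n M Klo Lmax : ℕ)
    (hM : M = 2*n + 2*sN + 12)
    (hKlo : Klo = 2*M - M/25)
    (hLmax : Lmax = (53*M)/100 + sN + 10)
    (hn : 20*sN + 200 ≤ n)
    (g : G) (hg1 : Klo < (cayleyGraph G S).dist 1 g)
    (hg2 : (cayleyGraph G S).dist 1 g ≤ 2*M) :
    ∃ x u h : G, g = u * x * h ∧ (cayleyGraph G S).dist 1 x ≤ n ∧
      IsBigonAt (cayleyGraph G S) 1 (13 * max Cd 1 + 13) s s x ∧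
      (cayleyGraph G S).dist 1 u ≤ M ∧ (cayleyGraph G S).dist 1 h ≤ Lmax := by
  set X := cayleyGraph G S with hXdef
  set dg := X.dist 1 g with hdg
  set k := dg / 2 with hkdef
  obtain ⟨u, hu1, hu2⟩ := fat_exists_mid hc 1 g k (by omega)
  have d1y : X.dist 1 (u⁻¹ * g) = X.dist u g := by
    have := fat_dist_mul S u⁻¹ u g
    simpa using this
  set ng := (k - (2*sN + 12))/2 with hngdef
  have hngle : ng ≤ X.dist 1 (u⁻¹ * g) := by rw [d1y]; omega
  obtain ⟨x, hx1, hx2⟩ := fat_exists_mid hc 1 (u⁻¹ * g) ng hngle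
  set l' := X.dist x (u⁻¹ * g) with hl'def
  have hl'eq : l' + ng + k = dg := by
    have h' := hx2
    rw [d1y] at h'
    rw [← hdg] at hu2
    omega
  have tdist : ∀ a b c : G, X.dist (a*b) (a*c) = X.dist b c := fun a b c =>
    fat_dist_mul S a b c
  have hw1 : X.dist u⁻¹ 1 = k := by
    have h := tdist u u⁻¹ 1
    simp only [mul_inv_cancel, mul_one] at h
    rw [h] at hu1
    exact hu1
  have hwy : X.dist u⁻¹ (u⁻¹ * g) = dg := by
    have h := tdist u u⁻¹ (u⁻¹ * g)
    simp only [mul_inv_cancel, mul_inv_cancel_left] at h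
    rw [← h]
  have hh1 : X.dist 1 (x⁻¹ * (u⁻¹ * g)) = l' := by
    have h := tdist x 1 (x⁻¹ * (u⁻¹ * g))
    simp only [mul_one, mul_inv_cancel_left] at h
    rw [← h, hl'def]
  -- numeric bounds
  have hb1 : 2*ng + 2*sN + 12 ≤ k := by omega
  have hb2 : k ≤ 6*ng := by omega
  have hb3 : ng + 2*sN + 12 ≤ l' := by omega
  have hb4 : l' ≤ 6*ng := by omega
  have hb5 : ng ≤ n := by omega
  have hb6 : k ≤ M := by omega
  have hb7 : l' ≤ Lmax := by omega
  have hbig : IsBigonAt X 1 (13 * max Cd 1 + 13) s s x := by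
    refine fat_good_isBigon hc hdiv hs x u⁻¹ (u⁻¹ * g) ?_ ?_ ?_ ?_ ?_
    · rw [hwy, hw1, hx1, ← hl'def]; omega
    · rw [hx1, hw1]
      have : ((2*ng + 2*sN + 12 : ℕ) : ℝ) ≤ (k : ℝ) := by exact_mod_cast hb1
      push_cast at this ⊢
      linarith
    · rw [hx1, hw1]
      have : ((k : ℕ) : ℝ) ≤ ((6*ng : ℕ) : ℝ) := by exact_mod_cast hb2
      push_cast at this ⊢
      linarith
    · rw [hx1, ← hl'def]
      have : ((ng + 2*sN + 12 : ℕ) : ℝ) ≤ (l' : ℝ) := by exact_mod_cast hb3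
      push_cast at this ⊢
      linarith
    · rw [hx1, ← hl'def]
      have : ((l' : ℕ) : ℝ) ≤ ((6*ng : ℕ) : ℝ) := by exact_mod_cast hb4
      push_cast at this ⊢
      linarith
  refine ⟨x, u, x⁻¹ * (u⁻¹ * g), by group, by rw [hx1]; omega, hbig, by rw [hu1]; omega, ?_⟩
  rw [hh1]; omega

end Aux6

/-- (Proposition 1.2.) A finitely generated one-ended group with
exponential growth and linear divergence admits exponentially many fat bigons (in any of its
Cayley graphs with respect to a finite symmetric generating set). -/
theorem expGrowth_linearDivergence_hasExpManyFatBigons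
    {G : Type*} [Group G] (S : Set G)
    (hSfin : S.Finite) (hSsymm : S⁻¹ = S) (hSgen : Subgroup.closure S = ⊤)
    (hends : OneEnded (cayleyGraph G S))
    (hgrowth : HasExpGrowth (cayleyGraph G S) 1)
    (C : ℝ) (hdiv : ∀ n : ℕ, DivLE (cayleyGraph G S) n (C * n)) :
    HasExpManyFatBigons (cayleyGraph G S) 1 := by
  classical
  haveI : Nonempty G := ⟨1⟩
  have hc : (cayleyGraph G S).Connected := fat_connected hSgen
  obtain ⟨a, ha, hlim⟩ := hgrowth
  have ha0 : (0:ℝ) < a := lt_trans zero_lt_one ha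
  obtain ⟨N₀, hN₀1, hN₀⟩ := fat_growth a ha
    (fun N => ((gBall (cayleyGraph G S) 1 N).ncard : ℝ)) (fun N => Nat.cast_nonneg _) hlim
  set L : ℝ := 13 * max C 1 + 13 with hLdef
  set c : ℝ := a ^ ((1:ℝ)/2) with hcdef
  have hc1 : 1 < c := by
    rw [hcdef]
    exact (Real.one_lt_rpow_iff_of_pos ha0).mpr (Or.inl ⟨ha, by norm_num⟩)
  have hL1 : 1 < L := by
    have := le_max_right C 1
    rw [hLdef]; linarith
  refine ⟨0, c, L, le_refl 0, hc1, hL1, ?_⟩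
  intro s hs
  refine ⟨s, hs, ?_⟩
  set sN := ⌈s⌉₊ with hsNdef
  have hsN : s ≤ (sN : ℝ) := Nat.le_ceil s
  set D2 := Real.logb a 2 with hD2def
  set D2N := ⌈D2⌉₊ with hD2Ndef
  have hD2N : D2 ≤ (D2N : ℝ) := Nat.le_ceil D2
  have hD2pow : ∀ t : ℝ, D2 ≤ t → (2:ℝ) ≤ a ^ t := by
    intro t ht
    calc (2:ℝ) = a ^ D2 := (Real.rpow_logb ha0 (ne_of_gt ha) (by norm_num)).symm
    _ ≤ a ^ t := (Real.rpow_le_rpow_left_iff ha).mpr ht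
  set N₁ := 8*(N₀+1) + 1000*sN + 1000*D2N + 1000 with hN₁def
  have key : ∀ n : ℕ, n ∈ Set.Ici N₁ →
      n ∈ {n : ℕ | (c ^ n : ℝ) ≤
        ((bigonSet (cayleyGraph G S) 1 L s s ∩ gBall (cayleyGraph G S) 1 n).ncard : ℝ)} := by
    intro n hn
    simp only [Set.mem_Ici] at hn
    simp only [Set.mem_setOf_eq]
    set M := 2*n + 2*sN + 12 with hM
    set Klo := 2*M - M/25 with hKlo
    set Lmax := (53*M)/100 + sN + 10 with hLmax
    set Bfin : ℕ → Finset G := fun N => (fat_ball_finite hSfin hc N).toFinset with hBfin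
    have hmemB : ∀ (N : ℕ) (v : G), v ∈ Bfin N ↔ (cayleyGraph G S).dist 1 v ≤ N := by
      intro N v
      rw [hBfin]
      simp [Set.Finite.mem_toFinset, gBall]
    have hsub : Bfin Klo ⊆ Bfin (2*M) := by
      intro v hv
      rw [hmemB] at hv ⊢
      omega
    set Ann := Bfin (2*M) \ Bfin Klo with hAnn
    have hgood : ∀ g ∈ Ann, ∃ p : G × G × G, g = p.2.1 * p.1 * p.2.2 ∧
        (cayleyGraph G S).dist 1 p.1 ≤ n ∧ IsBigonAt (cayleyGraph G S) 1 L s s p.1 ∧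
        (cayleyGraph G S).dist 1 p.2.1 ≤ M ∧ (cayleyGraph G S).dist 1 p.2.2 ≤ Lmax := by
      intro g hg
      rw [hAnn, Finset.mem_sdiff, hmemB, hmemB] at hg
      obtain ⟨x, u, h, h1, h2, h3, h4, h5⟩ :=
        fat_make_good hc hdiv hs sN hsN n M Klo Lmax hM hKlo hLmax (by omega) g
          (by omega) hg.1
      exact ⟨(x, u, h), h1, h2, h3, h4, h5⟩
    choose! FF hFF1 hFF2 hFF3 hFF4 hFF5 using hgood
    set img := Ann.image (fun g => (FF g).1) with himg
    -- fiber bound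
    have hfib : ∀ x0 ∈ img, (Ann.filter (fun g => (FF g).1 = x0)).card ≤
        ((Bfin M).card * (Bfin Lmax).card) := by
      intro x0 _
      have : (Ann.filter (fun g => (FF g).1 = x0)).card ≤ ((Bfin M) ×ˢ (Bfin Lmax)).card := by
        apply Finset.card_le_card_of_injOn (fun g => ((FF g).2.1, (FF g).2.2))
        · intro g hg
          rw [Finset.mem_coe, Finset.mem_filter] at hg
          rw [Finset.mem_coe, Finset.mem_product, hmemB, hmemB]
          exact ⟨hFF4 g hg.1, hFF5 g hg.1⟩
        · intro g1 hg1 g2 hg2 heq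
          rw [Finset.mem_coe, Finset.mem_filter] at hg1 hg2
          have e1 := hFF1 g1 hg1.1
          have e2 := hFF1 g2 hg2.1
          rw [hg1.2] at e1
          rw [hg2.2] at e2
          have h21 : (FF g1).2.1 = (FF g2).2.1 := congrArg Prod.fst heq
          have h22 : (FF g1).2.2 = (FF g2).2.2 := congrArg Prod.snd heq
          rw [e1, e2, h21, h22]
      simpa [Finset.card_product] using this
    have hcount : Ann.card ≤ ((Bfin M).card * (Bfin Lmax).card) * img.card :=
      Finset.card_le_mul_card_image _ _ hfib
    -- ℝ estimates
    have hBcard : ∀ N : ℕ, ((Bfin N).card : ℕ) = (gBall (cayleyGraph G S) 1 N).ncard := by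
      intro N
      rw [hBfin, Set.ncard_eq_toFinset_card _ (fat_ball_finite hSfin hc N)]
    -- growth bounds for the relevant radii
    have hrad : N₀ ≤ M ∧ N₀ ≤ 2*M ∧ N₀ ≤ Klo ∧ N₀ ≤ Lmax ∧ 20*sN + 200 ≤ n := by
      rw [hN₁def] at hn
      refine ⟨by omega, by omega, by omega, by omega, by omega⟩
    have hgb : ∀ N : ℕ, N₀ ≤ N →
        a ^ ((199:ℝ)/200 * N) ≤ ((Bfin N).card : ℝ) ∧
          ((Bfin N).card : ℝ) ≤ a ^ ((201:ℝ)/200 * N) := by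
      intro N hN
      have := hN₀ N hN
      rw [hBcard N]
      exact this
    -- cast facts for the arithmetic
    have hM25 : (25:ℝ) * ((M/25 : ℕ):ℝ) ≤ (M:ℝ) ∧ (M:ℝ) ≤ 25 * ((M/25 : ℕ):ℝ) + 24 := by
      constructor <;> exact_mod_cast (by omega : _)
    have hM53 : (100:ℝ) * (((53*M)/100 : ℕ):ℝ) ≤ 53*(M:ℝ) ∧
        53*(M:ℝ) ≤ 100 * (((53*M)/100 : ℕ):ℝ) + 99 := by
      constructor <;> exact_mod_cast (by omega : _)
    have hKloR : (Klo:ℝ) = 2*(M:ℝ) - ((M/25 : ℕ):ℝ) := by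
      rw [hKlo]
      have h25 : M/25 ≤ 2*M := by omega
      push_cast [Nat.cast_sub h25]
      ring
    have hMR : (M:ℝ) = 2*(n:ℝ) + 2*(sN:ℝ) + 12 := by rw [hM]; push_cast; ring
    have hLmaxR : (Lmax:ℝ) = (((53*M)/100 : ℕ):ℝ) + (sN:ℝ) + 10 := by
      rw [hLmax]; push_cast; ring
    have hnR : ((N₁:ℕ):ℝ) ≤ (n:ℝ) := by exact_mod_cast hn
    have hN₁R : ((N₁:ℕ):ℝ) = 8*((N₀:ℝ)+1) + 1000*(sN:ℝ) + 1000*(D2N:ℝ) + 1000 := by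
      rw [hN₁def]; push_cast; ring
    have hsN0 : (0:ℝ) ≤ (sN:ℝ) := Nat.cast_nonneg _
    have hN₀0 : (0:ℝ) ≤ (N₀:ℝ) := Nat.cast_nonneg _
    set E2 : ℝ := (199:ℝ)/200 * ((2*M : ℕ):ℝ) with hE2
    have hE2R : E2 = (199:ℝ)/200 * (2*(M:ℝ)) := by rw [hE2]; push_cast; ring
    -- annulus lower bound
    have hKloUb : (2:ℝ) * (((Bfin Klo).card : ℝ)) ≤ a ^ E2 := by
      have h1 : ((Bfin Klo).card : ℝ) ≤ a ^ ((201:ℝ)/200 * Klo) := (hgb Klo hrad.2.2.1).2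
      have h2 : (2:ℝ) ≤ a ^ (E2 - (201:ℝ)/200 * Klo) := by
        apply hD2pow
        rw [hE2R, hKloR]
        linarith [hM25.1, hM25.2, hD2N, hnR, hN₁R, hMR]
      have h3 : (0:ℝ) < a ^ ((201:ℝ)/200 * Klo) := Real.rpow_pos_of_pos ha0 _
      calc (2:ℝ) * ((Bfin Klo).card : ℝ) ≤ 2 * a ^ ((201:ℝ)/200 * Klo) := by linarith
      _ ≤ (a ^ (E2 - (201:ℝ)/200 * Klo)) * (a ^ ((201:ℝ)/200 * Klo)) :=
            mul_le_mul_of_nonneg_right h2 (le_of_lt h3)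
      _ = a ^ E2 := by rw [← Real.rpow_add ha0]; ring_nf
    have hAnnLb : (1/2:ℝ) * a ^ E2 ≤ (Ann.card : ℝ) := by
      have hcards : (Ann.card : ℝ) = ((Bfin (2*M)).card : ℝ) - ((Bfin Klo).card : ℝ) := by
        rw [hAnn, Finset.card_sdiff_of_subset hsub]
        push_cast [Nat.cast_sub (Finset.card_le_card hsub)]
        ring
      have h1 : a ^ E2 ≤ ((Bfin (2*M)).card : ℝ) := by
        have := (hgb (2*M) hrad.2.1).1
        rw [hE2]
        exact this
      rw [hcards]
      linarith
    -- upper bound for the fiber factor times c^n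
    have hcnR : (c ^ n : ℝ) = a ^ ((1:ℝ)/2 * (n:ℝ)) := by
      rw [hcdef, ← Real.rpow_natCast (a ^ ((1:ℝ)/2)) n, ← Real.rpow_mul (le_of_lt ha0)]
    have hprod : (c ^ n : ℝ) * (((Bfin M).card : ℝ) * ((Bfin Lmax).card : ℝ)) ≤
        (1/2:ℝ) * a ^ E2 := by
      have hu1 : ((Bfin M).card : ℝ) ≤ a ^ ((201:ℝ)/200 * M) := (hgb M hrad.1).2
      have hu2 : ((Bfin Lmax).card : ℝ) ≤ a ^ ((201:ℝ)/200 * Lmax) := (hgb Lmax hrad.2.2.2.1).2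
      set SS : ℝ := (1:ℝ)/2 * (n:ℝ) + (201:ℝ)/200 * M + (201:ℝ)/200 * Lmax with hSS
      have h2 : (2:ℝ) ≤ a ^ (E2 - SS) := by
        apply hD2pow
        rw [hE2R, hSS, hLmaxR]
        linarith [hM53.1, hM53.2, hD2N, hnR, hN₁R, hMR, hsN0, hN₀0]
      have hpos1 : (0:ℝ) < a ^ ((201:ℝ)/200 * M) := Real.rpow_pos_of_pos ha0 _
      have hpos2 : (0:ℝ) < a ^ ((201:ℝ)/200 * Lmax) := Real.rpow_pos_of_pos ha0 _
      have hpos0 : (0:ℝ) < a ^ ((1:ℝ)/2 * (n:ℝ)) := Real.rpow_pos_of_pos ha0 _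
      have hch : (c ^ n : ℝ) * (((Bfin M).card : ℝ) * ((Bfin Lmax).card : ℝ)) ≤ a ^ SS := by
        rw [hcnR, hSS, Real.rpow_add ha0, Real.rpow_add ha0]
        have hb1 : (0:ℝ) ≤ ((Bfin M).card : ℝ) := Nat.cast_nonneg _
        have hb2 : (0:ℝ) ≤ ((Bfin Lmax).card : ℝ) := Nat.cast_nonneg _
        calc a ^ ((1:ℝ)/2 * (n:ℝ)) * (((Bfin M).card : ℝ) * ((Bfin Lmax).card : ℝ))
            ≤ a ^ ((1:ℝ)/2 * (n:ℝ)) * ((a ^ ((201:ℝ)/200 * M)) * (a ^ ((201:ℝ)/200 * Lmax))) := by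
              apply mul_le_mul_of_nonneg_left _ (le_of_lt hpos0)
              exact mul_le_mul hu1 hu2 hb2 (le_of_lt hpos1)
        _ = a ^ ((1:ℝ)/2 * (n:ℝ)) * a ^ ((201:ℝ)/200 * M) * a ^ ((201:ℝ)/200 * Lmax) := by ring
      have hS0 : (0:ℝ) < a ^ SS := Real.rpow_pos_of_pos ha0 _
      have : (2:ℝ) * a ^ SS ≤ a ^ E2 := by
        calc (2:ℝ) * a ^ SS ≤ a ^ (E2 - SS) * a ^ SS :=
              mul_le_mul_of_nonneg_right h2 (le_of_lt hS0)
        _ = a ^ E2 := by rw [← Real.rpow_add ha0]; ring_nf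
      linarith
    -- conclude
    have hFpos : (0:ℝ) < ((Bfin M).card : ℝ) * ((Bfin Lmax).card : ℝ) := by
      have h1 : 1 ∈ Bfin M := by rw [hmemB]; simp [SimpleGraph.dist_self]
      have h2 : 1 ∈ Bfin Lmax := by rw [hmemB]; simp [SimpleGraph.dist_self]
      have c1 : 0 < (Bfin M).card := Finset.card_pos.mpr ⟨1, h1⟩
      have c2 : 0 < (Bfin Lmax).card := Finset.card_pos.mpr ⟨1, h2⟩
      have p1 : (0:ℝ) < ((Bfin M).card : ℝ) := by exact_mod_cast c1
      have p2 : (0:ℝ) < ((Bfin Lmax).card : ℝ) := by exact_mod_cast c2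
      exact mul_pos p1 p2
    have hchain : (c ^ n : ℝ) * (((Bfin M).card : ℝ) * ((Bfin Lmax).card : ℝ)) ≤
        ((img.card : ℝ)) * (((Bfin M).card : ℝ) * ((Bfin Lmax).card : ℝ)) := by
      have hcount' : (Ann.card : ℝ) ≤ (((Bfin M).card : ℝ) * ((Bfin Lmax).card : ℝ)) * (img.card : ℝ) := by
        exact_mod_cast hcount
      calc (c ^ n : ℝ) * (((Bfin M).card : ℝ) * ((Bfin Lmax).card : ℝ))
          ≤ (1/2:ℝ) * a ^ E2 := hprod
      _ ≤ (Ann.card : ℝ) := hAnnLb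
      _ ≤ (((Bfin M).card : ℝ) * ((Bfin Lmax).card : ℝ)) * (img.card : ℝ) := hcount'
      _ = ((img.card : ℝ)) * (((Bfin M).card : ℝ) * ((Bfin Lmax).card : ℝ)) := by ring
    have himgcard : (c ^ n : ℝ) ≤ (img.card : ℝ) :=
      le_of_mul_le_mul_right hchain hFpos
    -- the image consists of bigon points in the ball
    have hsubset : ↑img ⊆ bigonSet (cayleyGraph G S) 1 L s s ∩ gBall (cayleyGraph G S) 1 n := by
      intro x0 hx0
      rw [Finset.mem_coe, himg, Finset.mem_image] at hx0
      obtain ⟨g, hg, rfl⟩ := hx0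
      exact ⟨hFF3 g hg, hFF2 g hg⟩
    have hfin : (bigonSet (cayleyGraph G S) 1 L s s ∩ gBall (cayleyGraph G S) 1 n).Finite :=
      (fat_ball_finite hSfin hc n).subset Set.inter_subset_right
    have hncard : (img.card : ℕ) ≤
        (bigonSet (cayleyGraph G S) 1 L s s ∩ gBall (cayleyGraph G S) 1 n).ncard := by
      rw [← Set.ncard_coe_finset img]
      exact Set.ncard_le_ncard hsubset hfin
    have : ((img.card : ℕ) : ℝ) ≤
        ((bigonSet (cayleyGraph G S) 1 L s s ∩ gBall (cayleyGraph G S) 1 n).ncard : ℝ) := by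
      exact_mod_cast hncard
    linarith
  exact Set.Infinite.mono key (Set.Ici_infinite N₁)
end
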